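/- arXiv:2106.12540 — 4 statements merged into one kernel-verified Lean document; each statement's English description precedes it below -/
import Mathlib

section
/- Let $L$ be a number field with ring of integers $\mathcal{O}_L$. The closure of $L^\times$ (the principal ideles, diagonally embedded) in the finite ideles $\mathbb{A}_{L,f}^\times$ equals $L^\times \cdot \overline{\mathcal{O}_L^\times}$, where $\overline{\mathcal{O}_L^\times}$ denotes the closure of the global units $\mathcal{O}_L^\times$ in $\widehat{\mathcal{O}}_L^\times = \prod_v \mathcal{O}_{L_v}^\times$. -/
open NumberField

open IsDedekindDomain IsDedekindDomain.HeightOneSpectrum UniqueFactorizationMonoid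
open scoped nonZeroDivisors algebraMap

section Aux

variable {R : Type*} [CommRing R] [IsDedekindDomain R] {K : Type*} [Field K]
  [Algebra R K] [IsFractionRing R K]

/-- An element of `K` with `v`-adic valuation at most one for every height one prime `v`
lies in `R`. -/
lemma aux_exists_algebraMap_eq_of_valuation_le_one (k : K)
    (h : ∀ v : HeightOneSpectrum R, v.valuation K k ≤ 1) :
    ∃ r : R, algebraMap R K r = k := by
  classical
  obtain ⟨⟨a, s⟩, rfl⟩ := IsLocalization.mk'_surjective R⁰ k
  by_cases ha : a = 0
  · exact ⟨0, by simp [ha]⟩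
  have hs0 : (s : R) ≠ 0 := nonZeroDivisors.coe_ne_zero s
  have hval : ∀ v : HeightOneSpectrum R, v.intValuation a ≤ v.intValuation (s : R) := by
    intro v
    have h1 := h v
    rw [valuation_of_mk'] at h1
    have hsv : v.intValuation (s : R) ≠ 0 := v.intValuation_ne_zero _ hs0
    rw [div_le_iff₀ (zero_lt_iff.mpr hsv), one_mul] at h1
    exact h1
  have hdvd : (s : R) ∣ a := by
    rw [← Ideal.span_singleton_le_span_singleton, ← Ideal.dvd_iff_le]
    have hsI : Ideal.span {(s : R)} ≠ (0 : Ideal R) := by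
      simpa [Ideal.span_singleton_eq_bot] using hs0
    have haI : Ideal.span {a} ≠ (0 : Ideal R) := by
      simpa [Ideal.span_singleton_eq_bot] using ha
    rw [dvd_iff_normalizedFactors_le_normalizedFactors hsI haI, Multiset.le_iff_count]
    intro P
    by_cases hP : P ∈ normalizedFactors (Ideal.span {(s : R)})
    · have hPprime : Prime P := prime_of_normalized_factor P hP
      have hPne : P ≠ ⊥ := hPprime.ne_zero
      letI v : HeightOneSpectrum R := ⟨P, Ideal.isPrime_of_prime hPprime, hPne⟩
      have := hval v
      rw [intValuation_apply, intValuation_apply, v.intValuationDef_if_neg ha,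
        v.intValuationDef_if_neg hs0] at this
      rw [WithZero.exp_le_exp, neg_le_neg_iff, Int.ofNat_le] at this
      rwa [count_associates_factors_eq hsI v.isPrime v.ne_bot,
        count_associates_factors_eq haI v.isPrime v.ne_bot] at this
    · rw [Multiset.count_eq_zero_of_notMem hP]
      exact Nat.zero_le _
  obtain ⟨r, rfl⟩ := hdvd
  refine ⟨r, ?_⟩
  rw [mul_comm]
  exact (IsLocalization.mk'_mul_cancel_right _ _).symm

end Aux

section Open

variable (R : Type*) [CommRing R] [IsDedekindDomain R] (K : Type*) [Field K]
  [Algebra R K] [IsFractionRing R K]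

/-- The set of finite adeles that are everywhere integral is open. -/
lemma aux_isOpen_intAdeles :
    IsOpen {a : FiniteAdeleRing R K | ∀ v, a v ∈ v.adicCompletionIntegers K} := by
  have hnhds : {a : FiniteAdeleRing R K | ∀ v, a v ∈ v.adicCompletionIntegers K} ∈
      nhds (0 : FiniteAdeleRing R K) := by
    exact (RestrictedProduct.isOpen_forall_mem
      (fun v : HeightOneSpectrum R => Valued.isOpen_valuationSubring _)).mem_nhds
      (fun v => zero_mem _)
  let S : AddSubgroup (FiniteAdeleRing R K) :=
    { carrier := {a : FiniteAdeleRing R K | ∀ v, a v ∈ v.adicCompletionIntegers K}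
      zero_mem' := fun v => zero_mem _
      add_mem' := fun {a b} ha hb v => add_mem (ha v) (hb v)
      neg_mem' := fun {a} ha v => neg_mem (ha v) }
  exact AddSubgroup.isOpen_of_mem_nhds S hnhds

/-- The subgroup of idèles that are everywhere integral, with everywhere integral inverse. -/
def intIdeles : Subgroup (FiniteAdeleRing R K)ˣ where
  carrier := {x | (∀ v, ((x : FiniteAdeleRing R K)) v ∈ v.adicCompletionIntegers K) ∧
      (∀ v, (((x⁻¹ : (FiniteAdeleRing R K)ˣ) : FiniteAdeleRing R K)) v ∈
        v.adicCompletionIntegers K)}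
  one_mem' := ⟨fun v => one_mem _, fun v => by rw [inv_one]; exact one_mem _⟩
  mul_mem' := by
    rintro a b ⟨ha1, ha2⟩ ⟨hb1, hb2⟩
    refine ⟨fun v => mul_mem (ha1 v) (hb1 v), fun v => ?_⟩
    rw [mul_inv_rev]
    exact mul_mem (hb2 v) (ha2 v)
  inv_mem' := by
    rintro a ⟨ha1, ha2⟩
    exact ⟨ha2, fun v => by rw [inv_inv]; exact ha1 v⟩

lemma isOpen_intIdeles : IsOpen (intIdeles R K : Set (FiniteAdeleRing R K)ˣ) := by
  have h1 : IsOpen (Units.val ⁻¹'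
      {a : FiniteAdeleRing R K | ∀ v, a v ∈ v.adicCompletionIntegers K}) :=
    (aux_isOpen_intAdeles R K).preimage Units.continuous_val
  have h2 : IsOpen ((fun u : (FiniteAdeleRing R K)ˣ => ((u⁻¹ : _) : FiniteAdeleRing R K)) ⁻¹'
      {a : FiniteAdeleRing R K | ∀ v, a v ∈ v.adicCompletionIntegers K}) :=
    (aux_isOpen_intAdeles R K).preimage Units.continuous_coe_inv
  exact h1.inter h2

end Open

/-- For a number field `L`, the closure of the (diagonally embedded)
principal idèles `Lˣ` in the finite idèles `𝔸_{L,f}ˣ` equals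
`Lˣ · closure(𝓞_Lˣ)`, where the closure of the global units `𝓞_Lˣ` is taken
(inside the finite idèles, where it agrees with the closure in `∏ v, 𝓞_{L_v}ˣ`). -/
theorem closure_principal_ideles (L : Type*) [Field L] [NumberField L] :
    (Subgroup.topologicalClosure
        ((Units.map (algebraMap L (FiniteAdeleRing (𝓞 L) L)).toMonoidHom).range)) =
      ((Units.map (algebraMap L (FiniteAdeleRing (𝓞 L) L)).toMonoidHom).range) ⊔
        (Subgroup.topologicalClosure
          ((Units.map ((algebraMap L (FiniteAdeleRing (𝓞 L) L)).comp
              (algebraMap (𝓞 L) L)).toMonoidHom).range)) := by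
  set A := FiniteAdeleRing (𝓞 L) L
  set P : Subgroup Aˣ := (Units.map (algebraMap L A).toMonoidHom).range with hP
  set U : Subgroup Aˣ := (Units.map ((algebraMap L A).comp
      (algebraMap (𝓞 L) L)).toMonoidHom).range with hU
  have hUP : U ≤ P := by
    rintro x ⟨u, rfl⟩
    exact ⟨Units.map (algebraMap (𝓞 L) L).toMonoidHom u, by ext; rfl⟩
  -- the subgroup of everywhere-integral idèles intersected with `P` is contained in `U`
  have hWP : ∀ x : Aˣ, x ∈ intIdeles (𝓞 L) L → x ∈ P → x ∈ U := by
    rintro x ⟨hx1, hx2⟩ ⟨k, rfl⟩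
    have hcoe : ∀ (m : L) (v : HeightOneSpectrum (𝓞 L)),
        ((algebraMap L A m) v) = (m : v.adicCompletion L) := fun m v => rfl
    have hk : ∀ v : HeightOneSpectrum (𝓞 L), v.valuation L (k : L) ≤ 1 := by
      intro v
      have h0 := hx1 v
      rw [← valuedAdicCompletion_eq_valuation' v (k : L)]
      exact h0
    have hk' : ∀ v : HeightOneSpectrum (𝓞 L), v.valuation L ((k⁻¹ : Lˣ) : L) ≤ 1 := by
      intro v
      have h0 := hx2 v
      rw [← valuedAdicCompletion_eq_valuation' v ((k⁻¹ : Lˣ) : L)]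
      exact h0
    obtain ⟨r, hr⟩ := aux_exists_algebraMap_eq_of_valuation_le_one ((k : L)) hk
    obtain ⟨r', hr'⟩ := aux_exists_algebraMap_eq_of_valuation_le_one (((k⁻¹ : Lˣ) : L)) hk'
    have hinj : Function.Injective (algebraMap (𝓞 L) L) := IsFractionRing.injective _ _
    have hrr' : r * r' = 1 := by
      apply hinj
      rw [map_mul, map_one, hr, hr']
      exact k.val_inv_eq_inv_val ▸ (by simp)
    have hr'r : r' * r = 1 := by rwa [mul_comm] at hrr'
    refine ⟨⟨r, r', hrr', hr'r⟩, ?_⟩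
    rw [Units.ext_iff]
    show ((algebraMap L A).comp (algebraMap (𝓞 L) L)) r = algebraMap L A (k : L)
    rw [RingHom.comp_apply, hr]
  have hWopen := isOpen_intIdeles (𝓞 L) L
  apply le_antisymm
  · -- hard direction
    intro x hx
    have hxcl : x ∈ closure (P : Set Aˣ) := hx
    -- `x • W` is an open neighbourhood of `x`
    have hopen : IsOpen ((fun y => x * y) '' (intIdeles (𝓞 L) L : Set Aˣ)) :=
      (isOpenMap_mul_left x) _ hWopen
    have hmem : x ∈ (fun y => x * y) '' (intIdeles (𝓞 L) L : Set Aˣ) :=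
      ⟨1, (intIdeles (𝓞 L) L).one_mem, mul_one x⟩
    obtain ⟨α, hα1, hα2⟩ := (mem_closure_iff.mp hxcl) _ hopen hmem
    obtain ⟨w, hw, hxw⟩ := hα1
    -- `x = α * w⁻¹`
    have hxeq : x = α * w⁻¹ := by
      rw [← hxw]; group
    have hwinv : w⁻¹ ∈ intIdeles (𝓞 L) L := (intIdeles (𝓞 L) L).inv_mem hw
    -- `w⁻¹ = α⁻¹ * x ∈ closure P`
    have hwcl : w⁻¹ ∈ closure (P : Set Aˣ) := by
      have : (w⁻¹ : Aˣ) ∈ Subgroup.topologicalClosure P := by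
        have hα : α ∈ Subgroup.topologicalClosure P := P.le_topologicalClosure hα2
        have : α⁻¹ * x ∈ Subgroup.topologicalClosure P :=
          mul_mem (inv_mem hα) hx
        rwa [show α⁻¹ * x = w⁻¹ by rw [hxeq]; group] at this
      exact this
    -- `w⁻¹ ∈ closure U`
    have hwU : w⁻¹ ∈ Subgroup.topologicalClosure U := by
      show (w⁻¹ : Aˣ) ∈ closure (U : Set Aˣ)
      rw [mem_closure_iff]
      intro o ho hwo
      obtain ⟨β, ⟨hβo, hβW⟩, hβP⟩ := (mem_closure_iff.mp hwcl) (o ∩ (intIdeles (𝓞 L) L : Set Aˣ))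
        (ho.inter hWopen) ⟨hwo, hwinv⟩
      exact ⟨β, hβo, hWP β hβW hβP⟩
    rw [hxeq]
    exact Subgroup.mul_mem_sup hα2 hwU
  · -- easy direction
    refine sup_le (P.le_topologicalClosure) ?_
    exact Subgroup.topologicalClosure_minimal _
      (hUP.trans P.le_topologicalClosure) (Subgroup.isClosed_topologicalClosure _)
end

section
/- With notation as above, for integers $c \geq k > 0$ there is a group isomorphism $\mathcal{O}_{v,c}^\times / \mathcal{O}_{v,c+k}^\times \cong (\mathbb{F}^k[\epsilon])^\times / (\mathbb{F}^k)^\times$, where $\mathbb{F}^k = \mathcal{O}_{F_v}/\mathfrak{p}_v^k$ and $\mathbb{F}^k[\epsilon] = \mathbb{F}^k[X]/(X^2)$. In particular $\#(\mathcal{O}_{v,c}^\times / \mathcal{O}_{v,c+1}^\times) = q_v$ for $c \geq 1$, where $q_v$ is the residue field cardinality. -/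
/- Local setting as in Statement 6: `O` a DVR with uniformizer `ϖ` (the valuation ring
of a non-archimedean local field with residue cardinality `q`), `E` the maximal order of
a quadratic étale algebra, `O_{v,c} = O + ϖ^c·E`. -/

variable (O : Type*) [CommRing O] [IsDomain O] [IsDiscreteValuationRing O]
variable (E : Type*) [CommRing E] [Algebra O E]

/-- The order `O_{v,c} = O + ϖ^c·O_{E_v}` of conductor `ϖ^c`. -/
def condOrder (ϖ : O) (c : ℕ) : Subalgebra O E :=
  Algebra.adjoin O (Set.range fun y : E => ϖ ^ c • y)

/-- The unit group `O_{v,c}^×`, viewed as a subgroup of `O_{v,0}^× = O_{E_v}^×`. -/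
def condOrderUnits (ϖ : O) (c : ℕ) : Subgroup Eˣ where
  carrier := {u | (u : E) ∈ condOrder O E ϖ c ∧ ((u⁻¹ : Eˣ) : E) ∈ condOrder O E ϖ c}
  one_mem' := ⟨Subalgebra.one_mem _, by simpa using Subalgebra.one_mem _⟩
  mul_mem' := fun {a b} ha hb => ⟨by rw [Units.val_mul]; exact mul_mem ha.1 hb.1, by
    rw [mul_inv_rev, Units.val_mul]; exact mul_mem hb.2 ha.2⟩
  inv_mem' := fun {a} ha => ⟨ha.2, by simpa using ha.1⟩


section Stmt7Aux
set_option linter.unusedSectionVars false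

namespace Stmt7

variable {O E}
variable {α : E} {ϖ m n : O}

/-- element with coordinates `p` in the basis `1, α`. -/
def F (α : E) (p : O × O) : E := algebraMap O E p.1 + p.2 • α

theorem rp_aux (hb : ∀ x : E, ∃! p : O × O, x = algebraMap O E p.1 + p.2 • α) :
    ∀ x : E, ∃! p : O × O, x = F α p := hb

noncomputable def rp (hb : ∀ x : E, ∃! p : O × O, x = F α p) (x : E) : O × O := (hb x).choose

theorem rp_spec (hb : ∀ x : E, ∃! p : O × O, x = F α p) (x : E) : x = F α (rp hb x) :=
  (hb x).choose_spec.1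

theorem rp_eq (hb : ∀ x : E, ∃! p : O × O, x = F α p) {x : E} {p : O × O}
    (h : x = F α p) : rp hb x = p := ((hb x).choose_spec.2 p h).symm

theorem F_inj (hb : ∀ x : E, ∃! p : O × O, x = F α p) {p p' : O × O}
    (h : F α p = F α p') : p = p' := by
  have h1 := rp_eq hb (rfl : F α p = F α p)
  have h2 := rp_eq hb h
  exact h1.symm.trans h2

theorem F_add (p p' : O × O) : F α p + F α p' = F α (p.1 + p'.1, p.2 + p'.2) := by
  simp [F, map_add, add_smul]; ring

theorem F_mul (hq : α * α = F α (m, n)) (p p' : O × O) :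
    F α p * F α p' = F α (p.1 * p'.1 + m * p.2 * p'.2,
      p.1 * p'.2 + p'.1 * p.2 + n * p.2 * p'.2) := by
  simp only [F, Algebra.smul_def, map_add, map_mul] at hq ⊢
  ring_nf
  ring_nf at hq
  linear_combination (algebraMap O E p.2 * algebraMap O E p'.2) * hq

theorem F_one : F α ((1 : O), (0 : O)) = 1 := by simp [F]

theorem F_algebraMap (a : O) : F α (a, 0) = algebraMap O E a := by simp [F]

theorem F_smul (t : O) (p : O × O) : t • F α p = F α (t * p.1, t * p.2) := by
  simp only [F, smul_add, Algebra.smul_def, map_mul, mul_smul]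
  ring

/-- the subalgebra `O + ϖ^c E` described explicitly -/
def S (α : E) (ϖ m n : O) (hq : α * α = F α (m, n)) (c : ℕ) : Subalgebra O E where
  carrier := {x | ∃ p : O × O, x = F α (p.1, ϖ ^ c * p.2)}
  algebraMap_mem' := fun r => ⟨(r, 0), by simp [F]⟩
  add_mem' := by
    rintro x y ⟨p, rfl⟩ ⟨p', rfl⟩
    exact ⟨(p.1 + p'.1, p.2 + p'.2), by rw [F_add]; congr 1; ring_nf⟩
  mul_mem' := by
    rintro x y ⟨p, rfl⟩ ⟨p', rfl⟩
    refine ⟨(p.1 * p'.1 + m * (ϖ^c * p.2) * (ϖ^c * p'.2),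
      p.1 * p'.2 + p'.1 * p.2 + n * (ϖ^c * p.2) * p'.2), ?_⟩
    rw [F_mul hq]; congr 1; ring_nf
  one_mem' := ⟨(1, 0), by simp [F]⟩
  zero_mem' := ⟨(0, 0), by simp [F]⟩

theorem mem_iff (hb : ∀ x : E, ∃! p : O × O, x = F α p)
    (hq : α * α = F α (m, n)) (c : ℕ) (p : O × O) :
    F α p ∈ condOrder O E ϖ c ↔ ϖ ^ c ∣ p.2 := by
  constructor
  · intro h
    have hle : condOrder O E ϖ c ≤ S α ϖ m n hq c := by
      rw [condOrder, Algebra.adjoin_le_iff]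
      rintro x ⟨y, rfl⟩
      obtain ⟨py, hpy, -⟩ := hb y
      refine ⟨(ϖ^c * py.1, py.2), ?_⟩
      show ϖ ^ c • y = _
      rw [hpy, F_smul]
    obtain ⟨p', hp'⟩ := hle h
    have := F_inj hb hp'
    exact ⟨p'.2, by rw [this]⟩
  · rintro ⟨t, ht⟩
    have h1 : algebraMap O E p.1 ∈ condOrder O E ϖ c := Subalgebra.algebraMap_mem _ _
    have h2 : p.2 • α ∈ condOrder O E ϖ c := by
      rw [ht, mul_smul]
      exact Algebra.subset_adjoin ⟨t • α, rfl⟩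
    exact add_mem h1 h2
-- continuing: unit lemmas
theorem isUnit_add_of_dvd (hϖ : Irreducible ϖ) {A y : O} (hA : IsUnit A) (hy : ϖ ∣ y) :
    IsUnit (A + y) := by
  rw [← IsLocalRing.notMem_maximalIdeal, hϖ.maximalIdeal_eq] at hA ⊢
  intro h
  exact hA (by simpa using Ideal.sub_mem _ h (Ideal.mem_span_singleton.mpr hy))

theorem unit_rel (hb : ∀ x : E, ∃! p : O × O, x = F α p)
    (hq : α * α = F α (m, n)) (u : Eˣ) :
    (rp hb (u : E)).1 * (rp hb ((u⁻¹ : Eˣ) : E)).1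
      + m * (rp hb (u : E)).2 * (rp hb ((u⁻¹ : Eˣ) : E)).2 = 1 ∧
    (rp hb (u : E)).1 * (rp hb ((u⁻¹ : Eˣ) : E)).2
      + (rp hb ((u⁻¹ : Eˣ) : E)).1 * (rp hb (u : E)).2
      + n * (rp hb (u : E)).2 * (rp hb ((u⁻¹ : Eˣ) : E)).2 = 0 := by
  have h1 : F α (rp hb (u : E)) * F α (rp hb ((u⁻¹ : Eˣ) : E)) = F α ((1 : O), (0 : O)) := by
    rw [← rp_spec, ← rp_spec, F_one]
    exact_mod_cast u.mul_inv
  rw [F_mul hq] at h1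
  have := F_inj hb h1
  exact ⟨congrArg Prod.fst this, congrArg Prod.snd this⟩

theorem isUnit_rp_fst (hb : ∀ x : E, ∃! p : O × O, x = F α p)
    (hq : α * α = F α (m, n)) (hϖ : Irreducible ϖ) {c : ℕ} (hc : 1 ≤ c)
    {u : Eˣ} (hu : ϖ ^ c ∣ (rp hb (u : E)).2) : IsUnit (rp hb (u : E)).1 := by
  obtain ⟨h1, -⟩ := unit_rel hb hq u
  have hϖb : ϖ ∣ -(m * (rp hb (u : E)).2 * (rp hb ((u⁻¹ : Eˣ) : E)).2) := by
    have : ϖ ∣ (rp hb (u : E)).2 := dvd_trans (dvd_pow_self ϖ (by omega)) hu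
    obtain ⟨t, ht⟩ := this
    exact ⟨-(m * t * (rp hb ((u⁻¹ : Eˣ) : E)).2), by rw [ht]; ring⟩
  have : IsUnit ((rp hb (u : E)).1 * (rp hb ((u⁻¹ : Eˣ) : E)).1) := by
    have h2 := isUnit_add_of_dvd hϖ isUnit_one hϖb
    rw [show (1 : O) + -(m * (rp hb (u : E)).2 * (rp hb ((u⁻¹ : Eˣ) : E)).2)
      = (rp hb (u : E)).1 * (rp hb ((u⁻¹ : Eˣ) : E)).1 by linear_combination -h1] at h2
    exact h2
  exact isUnit_of_mul_isUnit_left this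

theorem inv_dvd (hb : ∀ x : E, ∃! p : O × O, x = F α p)
    (hq : α * α = F α (m, n)) (hϖ : Irreducible ϖ) {c k : ℕ} (hc : 1 ≤ c)
    {u : Eˣ} (huc : ϖ ^ c ∣ (rp hb (u : E)).2)
    (h : ϖ ^ (c + k) ∣ (rp hb (u : E)).2) : ϖ ^ (c + k) ∣ (rp hb ((u⁻¹ : Eˣ) : E)).2 := by
  obtain ⟨h1, h2⟩ := unit_rel hb hq u
  have hA : IsUnit (rp hb (u : E)).1 := isUnit_rp_fst hb hq hϖ hc huc
  have : ϖ ^ (c + k) ∣ (rp hb (u : E)).1 * (rp hb ((u⁻¹ : Eˣ) : E)).2 := by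
    obtain ⟨t, ht⟩ := h
    refine ⟨-((rp hb ((u⁻¹ : Eˣ) : E)).1 * t + n * t * (rp hb ((u⁻¹ : Eˣ) : E)).2), ?_⟩
    linear_combination h2 - (((rp hb ((u⁻¹ : Eˣ) : E)).1 : O) + n * (rp hb ((u⁻¹ : Eˣ) : E)).2) * ht
  exact (hA.dvd_mul_left).mp this

/-- existence of units with prescribed coordinates -/
theorem unit_pair (hq : α * α = F α (m, n)) (hϖ : Irreducible ϖ) {c : ℕ} (hc : 1 ≤ c)
    {A : O} (B : O) (hA : IsUnit A) :
    ∃ d : O, (A * A + n * A * (ϖ^c * B) - m * (ϖ^c * B) * (ϖ^c * B)) * d = 1 ∧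
      F α (A, ϖ^c * B) * F α (d * (A + n * (ϖ^c * B)), ϖ^c * (-(d * B))) = 1 := by
  set b := ϖ^c * B with hbdef
  have hD : IsUnit (A * A + n * A * b - m * b * b) := by
    obtain ⟨c', rfl⟩ : ∃ c', c = c' + 1 := ⟨c - 1, by omega⟩
    have h1 : ϖ ∣ (n * A * b - m * b * b) := by
      refine ⟨ϖ^c' * B * (n * A - m * (ϖ^(c'+1) * B)), ?_⟩
      rw [hbdef]; ring
    have := isUnit_add_of_dvd hϖ (hA.mul hA) h1
    rwa [show A * A + (n * A * b - m * b * b) = A * A + n * A * b - m * b * b by ring] at this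
  obtain ⟨d, hd1⟩ := hD.exists_left_inv
  refine ⟨d, by linear_combination hd1, ?_⟩
  rw [F_mul hq, ← F_one (O := O) (E := E) (α := α)]
  congr 1
  have : (A * A + n * A * b - m * b * b) * d = 1 := by linear_combination hd1
  rw [Prod.mk.injEq]
  dsimp only
  constructor
  · show A * (d * (A + n * b)) + m * b * (ϖ^c * (-(d*B))) = 1
    rw [hbdef]
    linear_combination this
  · show A * (ϖ^c * (-(d * B))) + d * (A + n * b) * b + n * b * (ϖ^c * (-(d*B))) = 0
    rw [hbdef]
    linear_combination (0:O)

-- dual number (AdjoinRoot X^2) lemmas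
open Polynomial in
theorem root_sq {R : Type*} [CommRing R] :
    AdjoinRoot.root (X ^ 2 : R[X]) * AdjoinRoot.root (X ^ 2 : R[X]) = 0 := by
  rw [← AdjoinRoot.mk_X, ← map_mul, ← sq, AdjoinRoot.mk_self]

open Polynomial in
theorem dual_mk (R : Type*) [CommRing R] (s t : R) :
    algebraMap R (AdjoinRoot (X ^ 2 : R[X])) s + t • AdjoinRoot.root (X ^ 2 : R[X])
      = AdjoinRoot.mk (X ^ 2 : R[X]) (C t * X + C s) := by
  rw [AdjoinRoot.algebraMap_eq, Algebra.smul_def, AdjoinRoot.algebraMap_eq, map_add, map_mul,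
    AdjoinRoot.mk_X]
  show AdjoinRoot.of _ s + AdjoinRoot.of _ t * _ = AdjoinRoot.of _ t * _ + AdjoinRoot.of _ s
  ring

open Polynomial in
theorem dual_rep {R : Type*} [CommRing R] [Nontrivial R] (z : AdjoinRoot (X ^ 2 : R[X])) :
    ∃ s t : R, z = algebraMap R _ s + t • AdjoinRoot.root (X ^ 2 : R[X]) := by
  obtain ⟨p, rfl⟩ := AdjoinRoot.mk_surjective z
  refine ⟨(p %ₘ X ^ 2).coeff 0, (p %ₘ X ^ 2).coeff 1, ?_⟩
  rw [dual_mk]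
  rw [AdjoinRoot.mk_eq_mk]
  have hmod : p %ₘ X ^ 2 = C ((p %ₘ X ^ 2).coeff 1) * X + C ((p %ₘ X ^ 2).coeff 0) := by
    apply eq_X_add_C_of_degree_le_one
    have h := degree_modByMonic_lt p (monic_X_pow 2 (R := R))
    rw [degree_X_pow] at h
    exact Order.lt_succ_iff.mp (by exact_mod_cast h)
  rw [← hmod]
  rw [modByMonic_eq_sub_mul_div p (X ^ 2)]
  exact ⟨p /ₘ X ^ 2, by ring⟩

open Polynomial in
theorem dual_uniq {R : Type*} [CommRing R] {s t s' t' : R}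
    (h : algebraMap R (AdjoinRoot (X ^ 2 : R[X])) s + t • AdjoinRoot.root (X ^ 2 : R[X])
       = algebraMap R _ s' + t' • AdjoinRoot.root (X ^ 2 : R[X])) : s = s' ∧ t = t' := by
  rw [dual_mk, dual_mk, AdjoinRoot.mk_eq_mk] at h
  obtain ⟨f, hf⟩ := h
  rw [mul_comm (X ^ 2 : R[X]) f] at hf
  have h0 := congrArg (fun p => Polynomial.coeff p 0) hf
  have h1 := congrArg (fun p => Polynomial.coeff p 1) hf
  simp [coeff_mul_X_pow'] at h0 h1
  exact ⟨sub_eq_zero.mp h0, sub_eq_zero.mp h1⟩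

open Polynomial in
theorem dual_isUnit {R : Type*} [CommRing R] {s : R} (t : R) (hs : IsUnit s) :
    IsUnit (algebraMap R (AdjoinRoot (X ^ 2 : R[X])) s + t • AdjoinRoot.root (X ^ 2 : R[X])) := by
  refine IsNilpotent.isUnit_add_left_of_commute ⟨2, ?_⟩ (hs.map _) (Commute.all _ _)
  rw [pow_two (t • AdjoinRoot.root (X ^ 2 : R[X])), smul_mul_smul_comm, root_sq, smul_zero]

open Polynomial in
theorem dual_isUnit_rev {R : Type*} [CommRing R] {s t : R}
    (h : IsUnit (algebraMap R (AdjoinRoot (X ^ 2 : R[X])) s + t • AdjoinRoot.root (X ^ 2 : R[X]))) :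
    IsUnit s := by
  have h2 := h.map (AdjoinRoot.liftAlgHom (X ^ 2 : R[X]) (Algebra.ofId R R) (0 : R) (by simp))
  simpa using h2

theorem mem_condOrderUnits {u : Eˣ} {c : ℕ} :
    u ∈ condOrderUnits O E ϖ c ↔
      (u : E) ∈ condOrder O E ϖ c ∧ ((u⁻¹ : Eˣ) : E) ∈ condOrder O E ϖ c := Iff.rfl

theorem rp_dvd_of_mem (hb : ∀ x : E, ∃! p : O × O, x = F α p)
    (hq : α * α = F α (m, n)) {c : ℕ} {x : E} (hx : x ∈ condOrder O E ϖ c) :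
    ϖ ^ c ∣ (rp hb x).2 :=
  (mem_iff hb hq c (rp hb x)).mp (by rw [← rp_spec hb x]; exact hx)

noncomputable def beta (hb : ∀ x : E, ∃! p : O × O, x = F α p)
    (hq : α * α = F α (m, n)) {c : ℕ} {x : E} (hx : x ∈ condOrder O E ϖ c) : O :=
  (rp_dvd_of_mem hb hq hx).choose

theorem beta_spec (hb : ∀ x : E, ∃! p : O × O, x = F α p)
    (hq : α * α = F α (m, n)) {c : ℕ} {x : E} (hx : x ∈ condOrder O E ϖ c) :
    (rp hb x).2 = ϖ ^ c * beta hb hq hx :=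
  (rp_dvd_of_mem hb hq hx).choose_spec

theorem beta_eq (hb : ∀ x : E, ∃! p : O × O, x = F α p)
    (hq : α * α = F α (m, n)) (hϖ0 : ϖ ≠ 0) {c : ℕ} {x : E}
    (hx : x ∈ condOrder O E ϖ c) {t : O} (h : (rp hb x).2 = ϖ ^ c * t) :
    beta hb hq hx = t := by
  have := (beta_spec hb hq hx).symm.trans h
  exact mul_left_cancel₀ (pow_ne_zero c hϖ0) this

theorem mem_higher_iff (hb : ∀ x : E, ∃! p : O × O, x = F α p)
    (hq : α * α = F α (m, n)) (hϖ : Irreducible ϖ) {c k : ℕ} (hc : 1 ≤ c) {u : Eˣ}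
    (hu : u ∈ condOrderUnits O E ϖ c) :
    u ∈ condOrderUnits O E ϖ (c + k) ↔ ϖ ^ (c + k) ∣ (rp hb (u : E)).2 := by
  constructor
  · intro h; exact rp_dvd_of_mem hb hq (mem_condOrderUnits.mp h).1
  · intro h
    have huc : ϖ ^ c ∣ (rp hb (u : E)).2 :=
      rp_dvd_of_mem hb hq (mem_condOrderUnits.mp hu).1
    refine ⟨?_, ?_⟩
    · rw [rp_spec hb (u : E), mem_iff hb hq]; exact h
    · rw [rp_spec hb ((u⁻¹ : Eˣ) : E), mem_iff hb hq]
      exact inv_dvd hb hq hϖ hc huc h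

theorem exists_unit (hb : ∀ x : E, ∃! p : O × O, x = F α p)
    (hq : α * α = F α (m, n)) (hϖ : Irreducible ϖ) {c : ℕ} (hc : 1 ≤ c)
    {A : O} (B : O) (hA : IsUnit A) :
    ∃ u : Eˣ, u ∈ condOrderUnits O E ϖ c ∧ rp hb (u : E) = (A, ϖ ^ c * B) ∧
      ∃ d : O, (A * A + n * A * (ϖ^c * B) - m * (ϖ^c * B) * (ϖ^c * B)) * d = 1 ∧
        rp hb ((u⁻¹ : Eˣ) : E) = (d * (A + n * (ϖ^c * B)), ϖ^c * (-(d * B))) := by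
  obtain ⟨d, hd, hprod⟩ := unit_pair hq hϖ hc B hA
  refine ⟨⟨F α (A, ϖ^c * B), F α (d * (A + n * (ϖ^c * B)), ϖ^c * (-(d * B))), hprod,
    by rw [mul_comm]; exact hprod⟩, ?_, rp_eq hb rfl, d, hd, rp_eq hb rfl⟩
  constructor
  · show F α (A, ϖ^c * B) ∈ condOrder O E ϖ c
    rw [mem_iff hb hq]; exact ⟨B, rfl⟩
  · show F α (d * (A + n * (ϖ^c * B)), ϖ^c * (-(d * B))) ∈ condOrder O E ϖ c
    rw [mem_iff hb hq]; exact ⟨-(d * B), rfl⟩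

-- quotient ring lemmas
theorem quot_zero_iff {k : ℕ} (x : O) :
    Ideal.Quotient.mk (Ideal.span {ϖ ^ k}) x = 0 ↔ ϖ ^ k ∣ x := by
  rw [Ideal.Quotient.eq_zero_iff_mem, Ideal.mem_span_singleton]

theorem isUnit_of_quot_isUnit (hϖ : Irreducible ϖ) {k : ℕ} (hk : 1 ≤ k) {A : O}
    (h : IsUnit (Ideal.Quotient.mk (Ideal.span {ϖ ^ k}) A)) : IsUnit A := by
  obtain ⟨s', hs'⟩ := h.exists_right_inv
  obtain ⟨A', rfl⟩ := Ideal.Quotient.mk_surjective s'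
  rw [← map_mul, ← map_one (Ideal.Quotient.mk (Ideal.span {ϖ ^ k})),
    Ideal.Quotient.eq, Ideal.mem_span_singleton] at hs'
  obtain ⟨t, ht⟩ := hs'
  have : A * A' = 1 + ϖ ^ k * t := by linear_combination ht
  have h2 : IsUnit (A * A') := by
    rw [this]
    exact isUnit_add_of_dvd hϖ isUnit_one ⟨ϖ ^ (k-1) * t, by
      rw [show ϖ * (ϖ ^ (k-1) * t) = ϖ ^ (k - 1 + 1) * t by ring]; congr 2; omega⟩
  exact isUnit_of_mul_isUnit_left h2

open Polynomial in
noncomputable def dElem (hb : ∀ x : E, ∃! p : O × O, x = F α p)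
    (hq : α * α = F α (m, n)) (k : ℕ) {c : ℕ} {x : E} (hx : x ∈ condOrder O E ϖ c) :
    AdjoinRoot (X ^ 2 : (O ⧸ Ideal.span {ϖ ^ k})[X]) :=
  algebraMap (O ⧸ Ideal.span {ϖ ^ k}) (AdjoinRoot (X ^ 2 : (O ⧸ Ideal.span {ϖ ^ k})[X]))
      (Ideal.Quotient.mk (Ideal.span {ϖ ^ k}) (rp hb x).1)
    + (Ideal.Quotient.mk (Ideal.span {ϖ ^ k}) (beta hb hq hx)) •
      AdjoinRoot.root (X ^ 2 : (O ⧸ Ideal.span {ϖ ^ k})[X])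

open Polynomial in
theorem piP_pow_zero {k c : ℕ} (hkc : k ≤ c) :
    (algebraMap (O ⧸ Ideal.span {ϖ ^ k}) (AdjoinRoot (X ^ 2 : (O ⧸ Ideal.span {ϖ ^ k})[X]))
      (Ideal.Quotient.mk _ ϖ)) ^ c = 0 := by
  have h1 : (Ideal.Quotient.mk (Ideal.span {ϖ ^ k}) ϖ) ^ k = 0 := by
    rw [← map_pow, quot_zero_iff]
  have h2 : (Ideal.Quotient.mk (Ideal.span {ϖ ^ k}) ϖ) ^ c = 0 := by
    rw [show c = (c - k) + k by omega, pow_add, h1, mul_zero]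
  rw [← map_pow, h2, map_zero]

open Polynomial in
theorem dElem_mul (hb : ∀ x : E, ∃! p : O × O, x = F α p)
    (hq : α * α = F α (m, n)) (hϖ0 : ϖ ≠ 0) {k c : ℕ} (hkc : k ≤ c) {x y : E}
    (hx : x ∈ condOrder O E ϖ c) (hy : y ∈ condOrder O E ϖ c)
    (hxy : x * y ∈ condOrder O E ϖ c) :
    dElem hb hq k hxy = dElem hb hq k hx * dElem hb hq k hy := by
  have hβx := beta_spec hb hq hx
  have hβy := beta_spec hb hq hy
  have hrpxy : rp hb (x * y) = ((rp hb x).1 * (rp hb y).1 + m * (rp hb x).2 * (rp hb y).2,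
      (rp hb x).1 * (rp hb y).2 + (rp hb y).1 * (rp hb x).2
        + n * (rp hb x).2 * (rp hb y).2) := by
    refine rp_eq hb ?_
    conv_lhs => rw [rp_spec hb x, rp_spec hb y]
    rw [F_mul hq]
  have hβxy : beta hb hq hxy = (rp hb x).1 * beta hb hq hy + (rp hb y).1 * beta hb hq hx
      + n * ϖ ^ c * beta hb hq hx * beta hb hq hy := by
    refine beta_eq hb hq hϖ0 hxy ?_
    rw [hrpxy]
    show (rp hb x).1 * (rp hb y).2 + (rp hb y).1 * (rp hb x).2
        + n * (rp hb x).2 * (rp hb y).2 = _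
    rw [hβx, hβy]; ring
  have hr := root_sq (R := O ⧸ Ideal.span {ϖ ^ k})
  have hP := piP_pow_zero (ϖ := ϖ) hkc
  unfold dElem
  rw [hrpxy, hβxy]
  show algebraMap _ _ (Ideal.Quotient.mk _ ((rp hb x).1 * (rp hb y).1 + m * (rp hb x).2 * (rp hb y).2)) + _ = _
  rw [hβx, hβy]
  simp only [Algebra.smul_def, map_add, map_mul, map_pow]
  set G := algebraMap (O ⧸ Ideal.span {ϖ ^ k}) (AdjoinRoot (X ^ 2 : (O ⧸ Ideal.span {ϖ ^ k})[X]))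
  set P := G (Ideal.Quotient.mk _ ϖ) with hPdef
  set A₁ := G (Ideal.Quotient.mk _ (rp hb x).1)
  set A₂ := G (Ideal.Quotient.mk _ (rp hb y).1)
  set B₁ := G (Ideal.Quotient.mk _ (beta hb hq hx))
  set B₂ := G (Ideal.Quotient.mk _ (beta hb hq hy))
  set M := G (Ideal.Quotient.mk _ m)
  set N := G (Ideal.Quotient.mk _ n)
  set r := AdjoinRoot.root (X ^ 2 : (O ⧸ Ideal.span {ϖ ^ k})[X])
  linear_combination (M * P ^ c * B₁ * B₂ + N * B₁ * B₂ * r) * hP - B₁ * B₂ * hr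

theorem dElem_one (hb : ∀ x : E, ∃! p : O × O, x = F α p)
    (hq : α * α = F α (m, n)) (hϖ0 : ϖ ≠ 0) {k c : ℕ}
    (h1 : (1 : E) ∈ condOrder O E ϖ c) : dElem hb hq k h1 = 1 := by
  have hrp1 : rp hb (1 : E) = ((1 : O), (0 : O)) :=
    rp_eq hb (F_one (O := O) (E := E) (α := α)).symm
  have hβ1 : beta hb hq h1 = 0 := beta_eq hb hq hϖ0 h1 (by rw [hrp1]; show (0 : O) = _; ring)
  unfold dElem
  rw [hrp1, hβ1]
  simp

theorem rp_mul (hb : ∀ x : E, ∃! p : O × O, x = F α p)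
    (hq : α * α = F α (m, n)) (x y : E) :
    rp hb (x * y) = ((rp hb x).1 * (rp hb y).1 + m * (rp hb x).2 * (rp hb y).2,
      (rp hb x).1 * (rp hb y).2 + (rp hb y).1 * (rp hb x).2
        + n * (rp hb x).2 * (rp hb y).2) := by
  refine rp_eq hb ?_
  conv_lhs => rw [rp_spec hb x, rp_spec hb y]
  rw [F_mul hq]

theorem beta_mul (hb : ∀ x : E, ∃! p : O × O, x = F α p)
    (hq : α * α = F α (m, n)) (hϖ0 : ϖ ≠ 0) {c : ℕ} {x y : E}
    (hx : x ∈ condOrder O E ϖ c) (hy : y ∈ condOrder O E ϖ c)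
    (hxy : x * y ∈ condOrder O E ϖ c) :
    beta hb hq hxy = (rp hb x).1 * beta hb hq hy + (rp hb y).1 * beta hb hq hx
      + n * ϖ ^ c * beta hb hq hx * beta hb hq hy := by
  refine beta_eq hb hq hϖ0 hxy ?_
  rw [rp_mul hb hq]
  show (rp hb x).1 * (rp hb y).2 + (rp hb y).1 * (rp hb x).2
      + n * (rp hb x).2 * (rp hb y).2 = _
  rw [beta_spec hb hq hx, beta_spec hb hq hy]; ring

/-- multiplicativity of `u ↦ β(u)·a'(u) mod ϖ` -/
theorem addMap_mul (hb : ∀ x : E, ∃! p : O × O, x = F α p)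
    (hq : α * α = F α (m, n)) (hϖ0 : ϖ ≠ 0) {c : ℕ} (hc : 1 ≤ c) (u v : Eˣ)
    (hu : ((u : Eˣ) : E) ∈ condOrder O E ϖ c) (hv : ((v : Eˣ) : E) ∈ condOrder O E ϖ c)
    (hui : ((u⁻¹ : Eˣ) : E) ∈ condOrder O E ϖ c) (hvi : ((v⁻¹ : Eˣ) : E) ∈ condOrder O E ϖ c)
    (huv : ((u * v : Eˣ) : E) ∈ condOrder O E ϖ c) :
    Ideal.Quotient.mk (Ideal.span {ϖ})
        (beta hb hq huv * (rp hb (((u * v)⁻¹ : Eˣ) : E)).1)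
      = Ideal.Quotient.mk (Ideal.span {ϖ}) (beta hb hq hu * (rp hb ((u⁻¹ : Eˣ) : E)).1)
        + Ideal.Quotient.mk (Ideal.span {ϖ}) (beta hb hq hv * (rp hb ((v⁻¹ : Eˣ) : E)).1) := by
  set ρ := Ideal.Quotient.mk (Ideal.span {ϖ}) with hρ
  have hρϖ : ρ ϖ = 0 := by rw [hρ]; simpa using (quot_zero_iff (k := 1) ϖ).mpr (by simp)
  have hρϖc : ρ (ϖ ^ c) = 0 := by
    rw [map_pow, hρϖ, zero_pow (by omega)]
  -- values of second components mod ϖ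
  have hdvd2 : ∀ w : Eˣ, ((w : Eˣ) : E) ∈ condOrder O E ϖ c → ρ ((rp hb ((w : Eˣ) : E)).2) = 0 := by
    intro w hw
    obtain ⟨t, ht⟩ := rp_dvd_of_mem hb hq hw
    rw [ht, map_mul, hρϖc, zero_mul]
  -- unit relations mod ϖ
  have hrel : ∀ w : Eˣ, ((w : Eˣ) : E) ∈ condOrder O E ϖ c →
      ((w⁻¹ : Eˣ) : E) ∈ condOrder O E ϖ c →
      ρ (rp hb ((w : Eˣ) : E)).1 * ρ (rp hb ((w⁻¹ : Eˣ) : E)).1 = 1 := by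
    intro w hw hwi
    have h1 := (unit_rel hb hq w).1
    have := congrArg ρ h1
    rw [map_add, map_one, map_mul, map_mul, map_mul, hdvd2 w hw, mul_zero, zero_mul,
      add_zero] at this
    exact this
  -- decompose (u*v) and (u*v)⁻¹
  have hval : ((u * v : Eˣ) : E) = ((u : Eˣ) : E) * ((v : Eˣ) : E) := rfl
  have hvalinv : (((u * v)⁻¹ : Eˣ) : E) = ((v⁻¹ : Eˣ) : E) * ((u⁻¹ : Eˣ) : E) := by
    rw [mul_inv_rev]; rfl
  have huv' : (((u : Eˣ) : E) * ((v : Eˣ) : E)) ∈ condOrder O E ϖ c := huv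
  have hbuv : beta hb hq huv = (rp hb ((u : Eˣ) : E)).1 * beta hb hq hv
      + (rp hb ((v : Eˣ) : E)).1 * beta hb hq hu
      + n * ϖ ^ c * beta hb hq hu * beta hb hq hv :=
    beta_mul hb hq hϖ0 hu hv huv'
  have hrpinv : (rp hb (((u * v)⁻¹ : Eˣ) : E)).1
      = (rp hb ((v⁻¹ : Eˣ) : E)).1 * (rp hb ((u⁻¹ : Eˣ) : E)).1
        + m * (rp hb ((v⁻¹ : Eˣ) : E)).2 * (rp hb ((u⁻¹ : Eˣ) : E)).2 := by
    rw [hvalinv, rp_mul hb hq]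
  have hdvdi : ∀ w : Eˣ, ((w⁻¹ : Eˣ) : E) ∈ condOrder O E ϖ c →
      ρ ((rp hb ((w⁻¹ : Eˣ) : E)).2) = 0 := by
    intro w hw
    obtain ⟨t, ht⟩ := rp_dvd_of_mem hb hq hw
    rw [ht, map_mul, hρϖc, zero_mul]
  have h1 := hrel u hu hui
  have h2 := hrel v hv hvi
  rw [hbuv, hrpinv]
  simp only [map_add, map_mul, hρϖc, hdvdi u hui, hdvdi v hvi, mul_zero, zero_mul,
    add_zero, zero_add]
  linear_combination (ρ (beta hb hq hv) * ρ (rp hb ((v⁻¹ : Eˣ) : E)).1) * h1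
    + (ρ (beta hb hq hu) * ρ (rp hb ((u⁻¹ : Eˣ) : E)).1) * h2

end Stmt7
end Stmt7Aux

/-- for `c ≥ k > 0` there is a group isomorphism
`O_{v,c}^× / O_{v,c+k}^× ≅ (𝔽^k[ε])^× / (𝔽^k)^×` where `𝔽^k = O/𝔭^k` and
`𝔽^k[ε] = 𝔽^k[X]/(X²)` is the ring of dual numbers; in particular
`#(O_{v,c}^×/O_{v,c+1}^×) = q_v` for `c ≥ 1`. -/
theorem condOrderUnits_consecutive_quotient (ϖ : O) (hϖ : Irreducible ϖ)
    [Module.Free O E] (hrank : Module.finrank O E = 2)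
    (hinj : Function.Injective (algebraMap O E))
    (α : E) (hα : IsUnit α) (hαtr : Algebra.trace O E α = 0)
    (hbasis : ∀ x : E, ∃! p : O × O, x = algebraMap O E p.1 + p.2 • α)
    (q : ℕ) (hq : Nat.card (O ⧸ Ideal.span {ϖ}) = q) :
    (∀ c k : ℕ, 0 < k → k ≤ c →
      Nonempty ((↥(condOrderUnits O E ϖ c) ⧸
          ((condOrderUnits O E ϖ (c + k)).subgroupOf (condOrderUnits O E ϖ c))) ≃*
        ((AdjoinRoot (Polynomial.X ^ 2 : Polynomial (O ⧸ Ideal.span {ϖ ^ k})))ˣ ⧸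
          (Units.map (algebraMap (O ⧸ Ideal.span {ϖ ^ k})
            (AdjoinRoot (Polynomial.X ^ 2 :
              Polynomial (O ⧸ Ideal.span {ϖ ^ k})))).toMonoidHom).range))) ∧
    (∀ c : ℕ, 1 ≤ c →
      Nat.card (↥(condOrderUnits O E ϖ c) ⧸
        ((condOrderUnits O E ϖ (c + 1)).subgroupOf (condOrderUnits O E ϖ c))) = q) := by
  classical
  obtain ⟨⟨m, n⟩, hmn, -⟩ := hbasis (α * α)
  have hb : ∀ x : E, ∃! p : O × O, x = Stmt7.F α p := hbasis
  have hq' : α * α = Stmt7.F α (m, n) := hmn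
  have hϖ0 : ϖ ≠ 0 := hϖ.ne_zero
  constructor
  · -- Part 1
    intro c k hk hkc
    have hc : 1 ≤ c := le_trans hk hkc
    haveI : Nontrivial (O ⧸ Ideal.span {ϖ ^ k}) := by
      refine Ideal.Quotient.nontrivial_iff.mpr ?_
      rw [Ne, Ideal.span_singleton_eq_top]
      intro h
      exact hϖ.not_isUnit ((isUnit_pow_iff (by omega)).mp h)
    set R := O ⧸ Ideal.span {ϖ ^ k} with hR
    set Dual := AdjoinRoot (Polynomial.X ^ 2 : Polynomial R) with hDual
    set π : O →+* R := Ideal.Quotient.mk (Ideal.span {ϖ ^ k}) with hπ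
    -- the underlying function
    have hmem1 : ∀ u : condOrderUnits O E ϖ c, ((u : Eˣ) : E) ∈ condOrder O E ϖ c :=
      fun u => (Stmt7.mem_condOrderUnits.mp u.2).1
    have hdu : ∀ u : condOrderUnits O E ϖ c, IsUnit (Stmt7.dElem hb hq' k (hmem1 u)) := by
      intro u
      unfold Stmt7.dElem
      exact Stmt7.dual_isUnit _
        ((Stmt7.isUnit_rp_fst hb hq' hϖ hc (Stmt7.rp_dvd_of_mem hb hq' (hmem1 u))).map π)
    let Φ : (condOrderUnits O E ϖ c) →* Dualˣ := MonoidHom.mk' (fun u => (hdu u).unit) (by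
      intro u v
      rw [Units.ext_iff]
      show Stmt7.dElem hb hq' k (hmem1 (u * v)) = Stmt7.dElem hb hq' k (hmem1 u) * Stmt7.dElem hb hq' k (hmem1 v)
      exact Stmt7.dElem_mul hb hq' hϖ0 hkc (hmem1 u) (hmem1 v) (hmem1 (u * v)))
    set H := (Units.map (algebraMap R Dual).toMonoidHom).range with hH
    let ψ : (condOrderUnits O E ϖ c) →* (Dualˣ ⧸ H) := (QuotientGroup.mk' H).comp Φ
    have hΦval : ∀ u : condOrderUnits O E ϖ c, ((Φ u : Dualˣ) : Dual)
        = algebraMap R Dual (π (Stmt7.rp hb ((u : Eˣ) : E)).1)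
          + (π (Stmt7.beta hb hq' (hmem1 u))) • AdjoinRoot.root _ := fun u => rfl
    have hker : ψ.ker = (condOrderUnits O E ϖ (c + k)).subgroupOf (condOrderUnits O E ϖ c) := by
      ext u
      have : u ∈ ψ.ker ↔ Φ u ∈ H := by
        rw [MonoidHom.mem_ker]
        exact QuotientGroup.eq_one_iff (Φ u)
      rw [this, Subgroup.mem_subgroupOf]
      constructor
      · rintro ⟨s, hs⟩
        have hval : algebraMap R Dual (s : R) + (0 : R) • AdjoinRoot.root _
            = algebraMap R Dual (π (Stmt7.rp hb ((u : Eˣ) : E)).1)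
              + (π (Stmt7.beta hb hq' (hmem1 u))) • AdjoinRoot.root _ := by
          rw [zero_smul, add_zero, ← hΦval u, ← hs]
          rfl
        obtain ⟨-, hβ0⟩ := Stmt7.dual_uniq hval
        have hdvd : ϖ ^ k ∣ Stmt7.beta hb hq' (hmem1 u) := by
          rw [hπ] at hβ0
          exact (Stmt7.quot_zero_iff _).mp hβ0.symm
        refine (Stmt7.mem_higher_iff hb hq' hϖ hc u.2).mpr ?_
        obtain ⟨t, ht⟩ := hdvd
        exact ⟨t, by rw [Stmt7.beta_spec hb hq' (hmem1 u), ht, pow_add]; ring⟩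
      · intro h
        have hdvd := (Stmt7.mem_higher_iff hb hq' hϖ hc u.2).mp h
        have hβ : ϖ ^ k ∣ Stmt7.beta hb hq' (hmem1 u) := by
          obtain ⟨t, ht⟩ := hdvd
          refine ⟨t, ?_⟩
          have h2 : ϖ ^ c * Stmt7.beta hb hq' (hmem1 u) = ϖ ^ c * (ϖ ^ k * t) := by
            rw [← Stmt7.beta_spec hb hq' (hmem1 u), ht, pow_add]; ring
          exact mul_left_cancel₀ (pow_ne_zero c hϖ0) h2
        have hβ0 : π (Stmt7.beta hb hq' (hmem1 u)) = 0 := by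
          rw [hπ]; exact (Stmt7.quot_zero_iff _).mpr hβ
        have ha : IsUnit (π (Stmt7.rp hb ((u : Eˣ) : E)).1) :=
          (Stmt7.isUnit_rp_fst hb hq' hϖ hc (Stmt7.rp_dvd_of_mem hb hq' (hmem1 u))).map π
        refine ⟨ha.unit, ?_⟩
        rw [Units.ext_iff]
        show algebraMap R Dual (ha.unit : R) = _
        rw [hΦval u, hβ0, zero_smul, add_zero, IsUnit.unit_spec]
    have hsurj : Function.Surjective ψ := by
      intro wq
      refine QuotientGroup.induction_on wq ?_
      intro w
      obtain ⟨s, t, hst⟩ := Stmt7.dual_rep (R := R) (w : Dual)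
      have hsu : IsUnit s := Stmt7.dual_isUnit_rev (by rw [← hst]; exact w.isUnit)
      obtain ⟨A, hA⟩ := Ideal.Quotient.mk_surjective (I := Ideal.span {ϖ ^ k}) s
      obtain ⟨B, hB⟩ := Ideal.Quotient.mk_surjective (I := Ideal.span {ϖ ^ k}) t
      have hAu : IsUnit A := Stmt7.isUnit_of_quot_isUnit hϖ hk (by rw [hA]; exact hsu)
      obtain ⟨u, humem, hrpu, -⟩ := Stmt7.exists_unit hb hq' hϖ (n := n) (m := m) hc B hAu
      refine ⟨⟨u, humem⟩, ?_⟩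
      have hΦw : Φ ⟨u, humem⟩ = w := by
        rw [Units.ext_iff]
        show Stmt7.dElem hb hq' k (hmem1 ⟨u, humem⟩) = (w : Dual)
        have hβu : Stmt7.beta hb hq' (hmem1 ⟨u, humem⟩) = B :=
          Stmt7.beta_eq hb hq' hϖ0 _ (by rw [hrpu])
        unfold Stmt7.dElem
        rw [hβu, hst]
        show algebraMap R Dual (π (Stmt7.rp hb (u : E)).1) + _ = _
        rw [hrpu, hA, hB]
      show (QuotientGroup.mk' H) (Φ ⟨u, humem⟩) = _
      rw [hΦw]
      rfl
    exact ⟨(QuotientGroup.quotientMulEquivOfEq hker.symm).trans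
      (QuotientGroup.quotientKerEquivOfSurjective ψ hsurj)⟩
  · -- Part 2
    intro c hc
    set ρ : O →+* O ⧸ Ideal.span {ϖ} := Ideal.Quotient.mk (Ideal.span {ϖ}) with hρ
    have hρϖ : ρ ϖ = 0 := by
      rw [hρ, Ideal.Quotient.eq_zero_iff_mem]
      exact Ideal.mem_span_singleton.mpr dvd_rfl
    have hmem1 : ∀ u : condOrderUnits O E ϖ c, ((u : Eˣ) : E) ∈ condOrder O E ϖ c :=
      fun u => (Stmt7.mem_condOrderUnits.mp u.2).1
    have hmem2 : ∀ u : condOrderUnits O E ϖ c, (((u : Eˣ)⁻¹ : Eˣ) : E) ∈ condOrder O E ϖ c :=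
      fun u => (Stmt7.mem_condOrderUnits.mp u.2).2
    let g : (condOrderUnits O E ϖ c) →* Multiplicative (O ⧸ Ideal.span {ϖ}) :=
      MonoidHom.mk' (fun u => Multiplicative.ofAdd
        (ρ (Stmt7.beta hb hq' (hmem1 u) * (Stmt7.rp hb (((u : Eˣ)⁻¹ : Eˣ) : E)).1))) (by
        intro u v
        have h := Stmt7.addMap_mul hb hq' hϖ0 hc (u : Eˣ) (v : Eˣ) (hmem1 u) (hmem1 v)
          (hmem2 u) (hmem2 v) (hmem1 (u * v))
        exact congrArg Multiplicative.ofAdd h)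
    have hgval : ∀ u : condOrderUnits O E ϖ c, g u = Multiplicative.ofAdd
        (ρ (Stmt7.beta hb hq' (hmem1 u) * (Stmt7.rp hb (((u : Eˣ)⁻¹ : Eˣ) : E)).1)) := fun u => rfl
    have hker : g.ker = (condOrderUnits O E ϖ (c + 1)).subgroupOf (condOrderUnits O E ϖ c) := by
      ext u
      rw [MonoidHom.mem_ker, Subgroup.mem_subgroupOf]
      have haiu : IsUnit (Stmt7.rp hb ((((u : Eˣ))⁻¹ : Eˣ) : E)).1 := by
        refine Stmt7.isUnit_rp_fst hb hq' hϖ hc (u := (u : Eˣ)⁻¹) ?_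
        exact Stmt7.rp_dvd_of_mem hb hq' (hmem2 u)
      constructor
      · intro h
        have h0 : ρ (Stmt7.beta hb hq' (hmem1 u) * (Stmt7.rp hb (((u : Eˣ)⁻¹ : Eˣ) : E)).1) = 0 := h
        rw [hρ, Ideal.Quotient.eq_zero_iff_mem, Ideal.mem_span_singleton] at h0
        have hβ : ϖ ∣ Stmt7.beta hb hq' (hmem1 u) := (haiu.dvd_mul_right).mp h0
        refine (Stmt7.mem_higher_iff hb hq' hϖ hc u.2 (k := 1)).mpr ?_
        obtain ⟨t, ht⟩ := hβ
        exact ⟨t, by rw [Stmt7.beta_spec hb hq' (hmem1 u), ht, pow_succ]; ring⟩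
      · intro h
        have hdvd := (Stmt7.mem_higher_iff hb hq' hϖ hc u.2 (k := 1)).mp h
        have hβ : ϖ ∣ Stmt7.beta hb hq' (hmem1 u) := by
          obtain ⟨t, ht⟩ := hdvd
          refine ⟨t, ?_⟩
          refine mul_left_cancel₀ (pow_ne_zero c hϖ0) ?_
          rw [← Stmt7.beta_spec hb hq' (hmem1 u), ht, pow_succ]; ring
        have h0 : ρ (Stmt7.beta hb hq' (hmem1 u) * (Stmt7.rp hb (((u : Eˣ)⁻¹ : Eˣ) : E)).1) = 0 := by
          obtain ⟨t, ht⟩ := hβ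
          rw [ht, hρ, Ideal.Quotient.eq_zero_iff_mem]
          exact Ideal.mem_span_singleton.mpr ⟨t * (Stmt7.rp hb (((u : Eˣ)⁻¹ : Eˣ) : E)).1, by ring⟩
        rw [hgval u, h0]
        rfl
    have hsurj : Function.Surjective g := by
      intro t
      obtain ⟨B, hB⟩ := Ideal.Quotient.mk_surjective (I := Ideal.span {ϖ}) (Multiplicative.toAdd t)
      obtain ⟨u, humem, hrpu, d, hd, hrpui⟩ :=
        Stmt7.exists_unit hb hq' hϖ (n := n) (m := m) hc B isUnit_one
      refine ⟨⟨u, humem⟩, ?_⟩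
      rw [hgval ⟨u, humem⟩]
      have hβu : Stmt7.beta hb hq' (hmem1 ⟨u, humem⟩) = B :=
        Stmt7.beta_eq hb hq' hϖ0 _ (by rw [hrpu])
      have hρd : ρ d = 1 := by
        have h2 := congrArg ρ hd
        rw [map_mul, map_one] at h2
        rw [← h2]
        have hρϖc : ρ (ϖ ^ c) = 0 := by rw [map_pow, hρϖ, zero_pow (by omega)]
        simp only [map_add, map_sub, map_mul, map_one, hρϖc, mul_zero, zero_mul, sub_zero,
          add_zero, one_mul]
      have hval2 : ρ (Stmt7.beta hb hq' (hmem1 ⟨u, humem⟩)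
          * (Stmt7.rp hb (((u : Eˣ)⁻¹ : Eˣ) : E)).1) = Multiplicative.toAdd t := by
        rw [hβu]
        show ρ (B * (Stmt7.rp hb ((u⁻¹ : Eˣ) : E)).1) = _
        rw [hrpui]
        have hρϖc : ρ (ϖ ^ c) = 0 := by rw [map_pow, hρϖ, zero_pow (by omega)]
        rw [show ρ (B * (d * (1 + n * (ϖ ^ c * B)))) =
          ρ B * (ρ d * (1 + ρ n * (ρ (ϖ ^ c) * ρ B))) by simp [map_mul, map_add, map_one]]
        rw [hρϖc, hρd]
        simpa using hB
      rw [hval2]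
      rfl
    have e1 := (QuotientGroup.quotientMulEquivOfEq hker.symm).trans
      (QuotientGroup.quotientKerEquivOfSurjective g hsurj)
    rw [← hq, Nat.card_congr e1.toEquiv]
    exact Nat.card_congr Multiplicative.toAdd
end

section
/- Let $F$ be a non-archimedean local field, $G = GL_{n+1}(F) \times GL_n(F)$, $H = \Delta(GL_n(F))$ embedded diagonally (via the upper-left block embedding into $GL_{n+1}$), and $K = GL_{n+1}(\mathcal{O}) \times GL_n(\mathcal{O})$. For $\star \in \{1,2\}$ let $g_\star = (A_\star, B_\star)$ where $A_\star$ has diagonal $(\varpi^{a_{1,\star}},\dots,\varpi^{a_{n,\star}}, \varpi^{c_\star})$ with last column entries $1$ above $\varpi^{c_\star}$, and $B_\star = \mathrm{diag}(\varpi^{b_{1,\star}},\dots,\varpi^{b_{n,\star}})$, with $(a_{k,\star})_k$ non-increasing and $(b_{k,\star})_k$ non-decreasing. If $H g_1 K = H g_2 K$ then $c_1 = c_2$ and $a_{k,1} - b_{k,1} = a_{k,2} - b_{k,2}$ for all $1 \leq k \leq n$. -/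
open Matrix Finset

section Key
variable {n : ℕ} {F : Type*} [Field F] {O : ValuationSubring F}

lemma perm_pigeonhole (r : Fin n) (σ : Equiv.Perm (Fin n)) :
    ∃ j : Fin n, j ≤ r ∧ r ≤ σ j := by
  by_contra hc
  push_neg at hc
  have hmaps : ∀ j ∈ Finset.Iic r, σ j ∈ Finset.Iio r := by
    intro j hj
    simp only [Finset.mem_Iic] at hj
    simp only [Finset.mem_Iio]
    exact hc j hj
  have := Finset.card_le_card_of_injOn σ hmaps (σ.injective.injOn)
  rw [Fin.card_Iic, Fin.card_Iio] at this
  omega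

lemma key_le (ϖ : O) (hϖ : Irreducible ϖ) (d e : Fin n → ℤ)
    (hd : ∀ k l : Fin n, k ≤ l → d l ≤ d k) (he : ∀ k l : Fin n, k ≤ l → e l ≤ e k)
    (P K : Matrix (Fin n) (Fin n) O) (hP : IsUnit P.det)
    (hrel : ∀ i j, (ϖ : F) ^ (d i) * (P i j : F) = (K i j : F) * (ϖ : F) ^ (e j))
    (r : Fin n) : e r ≤ d r := by
  by_contra hlt
  push_neg at hlt
  have h0 : (ϖ : F) ≠ 0 := by
    simpa using (Subtype.coe_injective.ne hϖ.ne_zero)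
  have hblock : ∀ i j : Fin n, r ≤ i → j ≤ r → ϖ ∣ P i j := by
    intro i j hi hj
    have hge : 1 ≤ e j - d i := by
      have h1 := he j r hj
      have h2 := hd r i hi
      omega
    have h1 : (P i j : F) = (K i j : F) * (ϖ : F) ^ (e j - d i) := by
      have hne : (ϖ : F) ^ (d i) ≠ 0 := zpow_ne_zero _ h0
      rw [zpow_sub₀ h0, ← mul_div_assoc, eq_div_iff hne, mul_comm ((P i j : F))]
      exact hrel i j
    set m : ℕ := (e j - d i).toNat with hm
    have hm1 : (e j - d i) = (m : ℤ) := by omega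
    rw [hm1, zpow_natCast] at h1
    have h2 : (P i j : F) = ((K i j * ϖ ^ m : O) : F) := by push_cast; linear_combination h1
    have h3 : P i j = K i j * ϖ ^ m := Subtype.coe_injective h2
    have hm0 : m ≠ 0 := by omega
    have hpow : ϖ ^ m = ϖ * ϖ ^ (m - 1) := by
      rw [← pow_succ']; congr 1; omega
    exact ⟨K i j * ϖ ^ (m - 1), by rw [h3, hpow]; ring⟩
  have hdvd : ϖ ∣ P.det := by
    rw [Matrix.det_apply]
    refine Finset.dvd_sum fun σ _ => ?_
    obtain ⟨j, hj, hσj⟩ := perm_pigeonhole r σ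
    have : ϖ ∣ ∏ i, P (σ i) i :=
      (hblock (σ j) j hσj hj).trans (Finset.dvd_prod_of_mem (fun i => P (σ i) i) (Finset.mem_univ j))
    rw [Units.smul_def, zsmul_eq_mul]
    exact this.mul_left _
  exact hϖ.not_isUnit (isUnit_of_dvd_unit hdvd hP)

lemma key_eq (ϖ : O) (hϖ : Irreducible ϖ) (d e : Fin n → ℤ)
    (hd : ∀ k l : Fin n, k ≤ l → d l ≤ d k) (he : ∀ k l : Fin n, k ≤ l → e l ≤ e k)
    (P K : Matrix (Fin n) (Fin n) O) (hP : IsUnit P.det) (hK : IsUnit K.det)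
    (hrel : ∀ i j, (ϖ : F) ^ (d i) * (P i j : F) = (K i j : F) * (ϖ : F) ^ (e j))
    (r : Fin n) : d r = e r := by
  refine le_antisymm ?_ (key_le ϖ hϖ d e hd he P K hP hrel r)
  have hrel' : ∀ i j, (ϖ : F) ^ (e i) * (Kᵀ i j : F) = (Pᵀ i j : F) * (ϖ : F) ^ (d j) := by
    intro i j
    have := hrel j i
    simp only [Matrix.transpose_apply]
    linear_combination -this
  simpa using key_le ϖ hϖ e d he hd Kᵀ Pᵀ (by simpa using hK)
    (fun i j => by rw [hrel' i j, mul_comm]) r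
end Key


/-- The upper-left block embedding `GL_n → GL_{n+1}` at the level of matrices. -/
def glIota {F : Type*} [Field F] (n : ℕ) (m : Matrix (Fin n) (Fin n) F) :
    Matrix (Fin (n + 1)) (Fin (n + 1)) F :=
  fun i j =>
    if hi : (i : ℕ) < n then
      (if hj : (j : ℕ) < n then m ⟨i, hi⟩ ⟨j, hj⟩ else 0)
    else (if (j : ℕ) = n then 1 else 0)

/-- The matrix with diagonal `(ϖ^{a_1},…,ϖ^{a_n},ϖ^c)`, last column entries `1` above
`ϖ^c`, and zeros elsewhere. -/
noncomputable def repMatrixC {F : Type*} [Field F] (n : ℕ) (ϖ : F) (a : Fin n → ℤ)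
    (c : ℤ) : Matrix (Fin (n + 1)) (Fin (n + 1)) F :=
  fun i j =>
    if hi : (i : ℕ) < n then
      (if i = j then ϖ ^ (a ⟨i, hi⟩) else if (j : ℕ) = n then 1 else 0)
    else (if (j : ℕ) = n then ϖ ^ c else 0)

section Entries
variable {F : Type*} [Field F] {n : ℕ}

lemma glIota_cc (m : Matrix (Fin n) (Fin n) F) (i j : Fin n) :
    glIota n m i.castSucc j.castSucc = m i j := by
  simp [glIota]

lemma glIota_cl (m : Matrix (Fin n) (Fin n) F) (i : Fin n) :
    glIota n m i.castSucc (Fin.last n) = 0 := by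
  simp [glIota]

lemma glIota_lc (m : Matrix (Fin n) (Fin n) F) (j : Fin n) :
    glIota n m (Fin.last n) j.castSucc = 0 := by
  simp [glIota, Nat.ne_of_lt j.is_lt]

lemma glIota_ll (m : Matrix (Fin n) (Fin n) F) :
    glIota n m (Fin.last n) (Fin.last n) = 1 := by
  simp [glIota]

lemma rep_cc (ϖ : F) (a : Fin n → ℤ) (c : ℤ) (i j : Fin n) :
    repMatrixC n ϖ a c i.castSucc j.castSucc = if i = j then ϖ ^ (a i) else 0 := by
  simp [repMatrixC, Fin.castSucc_inj, Nat.ne_of_lt j.is_lt]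

lemma rep_cl (ϖ : F) (a : Fin n → ℤ) (c : ℤ) (i : Fin n) :
    repMatrixC n ϖ a c i.castSucc (Fin.last n) = 1 := by
  simp [repMatrixC, (Fin.castSucc_lt_last i).ne]

lemma rep_lc (ϖ : F) (a : Fin n → ℤ) (c : ℤ) (j : Fin n) :
    repMatrixC n ϖ a c (Fin.last n) j.castSucc = 0 := by
  simp [repMatrixC, Nat.ne_of_lt j.is_lt]

lemma rep_ll (ϖ : F) (a : Fin n → ℤ) (c : ℤ) :
    repMatrixC n ϖ a c (Fin.last n) (Fin.last n) = ϖ ^ c := by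
  simp [repMatrixC]

lemma prod_lc (m : Matrix (Fin n) (Fin n) F) (ϖ : F) (a : Fin n → ℤ) (c : ℤ) (j : Fin n) :
    (glIota n m * repMatrixC n ϖ a c) (Fin.last n) j.castSucc = 0 := by
  rw [Matrix.mul_apply, Fin.sum_univ_castSucc]
  simp [glIota_lc, glIota_ll, rep_lc]

lemma prod_ll (m : Matrix (Fin n) (Fin n) F) (ϖ : F) (a : Fin n → ℤ) (c : ℤ) :
    (glIota n m * repMatrixC n ϖ a c) (Fin.last n) (Fin.last n) = ϖ ^ c := by
  rw [Matrix.mul_apply, Fin.sum_univ_castSucc]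
  simp [glIota_lc, glIota_ll, rep_ll]

lemma prod_cc (m : Matrix (Fin n) (Fin n) F) (ϖ : F) (a : Fin n → ℤ) (c : ℤ) (i j : Fin n) :
    (glIota n m * repMatrixC n ϖ a c) i.castSucc j.castSucc = m i j * ϖ ^ (a j) := by
  rw [Matrix.mul_apply, Fin.sum_univ_castSucc]
  simp [glIota_cc, glIota_cl, rep_cc, mul_ite, mul_zero]

lemma prod_cl (m : Matrix (Fin n) (Fin n) F) (ϖ : F) (a : Fin n → ℤ) (c : ℤ) (i : Fin n) :
    (glIota n m * repMatrixC n ϖ a c) i.castSucc (Fin.last n) = ∑ l, m i l := by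
  rw [Matrix.mul_apply, Fin.sum_univ_castSucc]
  simp [glIota_cc, glIota_cl, rep_cl]
end Entries



/-- uniqueness of the double coset parametrization.  With
`G = GL_{n+1}(F) × GL_n(F)`, `H = Δ(GL_n(F))` (via the upper-left block embedding) and
`K = GL_{n+1}(O) × GL_n(O)`, if the elements `g_⋆ = (A_⋆, B_⋆)` (`⋆ = 1,2`) as described
— `(a_{k,⋆})_k` non-increasing, `(b_{k,⋆})_k` non-decreasing — satisfy
`H g₁ K = H g₂ K`, then `c₁ = c₂` and `a_{k,1} - b_{k,1} = a_{k,2} - b_{k,2}` for all `k`. -/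
theorem doset_representative_unique
    (n : ℕ) (F : Type*) [Field F] (O : ValuationSubring F)
    [IsDiscreteValuationRing O] (ϖ : O) (hϖ : Irreducible ϖ)
    (a₁ a₂ b₁ b₂ : Fin n → ℤ) (c₁ c₂ : ℤ)
    (ha₁ : ∀ k l : Fin n, k ≤ l → a₁ l ≤ a₁ k) (ha₂ : ∀ k l : Fin n, k ≤ l → a₂ l ≤ a₂ k)
    (hb₁ : ∀ k l : Fin n, k ≤ l → b₁ k ≤ b₁ l) (hb₂ : ∀ k l : Fin n, k ≤ l → b₂ k ≤ b₂ l)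
    (hcoset : ∃ h : Matrix (Fin n) (Fin n) F, IsUnit h ∧
      ∃ (k₁ : Matrix (Fin (n + 1)) (Fin (n + 1)) O) (k₂ : Matrix (Fin n) (Fin n) O),
        IsUnit k₁ ∧ IsUnit k₂ ∧
        glIota n h * repMatrixC n (ϖ : F) a₁ c₁ * (k₁.map O.subtype) =
          repMatrixC n (ϖ : F) a₂ c₂ ∧
        h * Matrix.diagonal (fun i => (ϖ : F) ^ (b₁ i)) * (k₂.map O.subtype) =
          Matrix.diagonal (fun i => (ϖ : F) ^ (b₂ i))) :
    c₁ = c₂ ∧ ∀ k : Fin n, a₁ k - b₁ k = a₂ k - b₂ k := by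
  obtain ⟨h, hh, k₁, k₂, hk₁, hk₂, eq1, eq2⟩ := hcoset
  have h0 : (ϖ : F) ≠ 0 := by
    simpa using (Subtype.coe_injective.ne hϖ.ne_zero)
  -- last row of eq1
  have hrow : ∀ j : Fin (n + 1),
      (ϖ : F) ^ c₁ * ((k₁ (Fin.last n) j : O) : F)
        = repMatrixC n (ϖ : F) a₂ c₂ (Fin.last n) j := by
    intro j
    have E := congrFun (congrFun eq1 (Fin.last n)) j
    rw [Matrix.mul_apply, Fin.sum_univ_castSucc] at E
    simpa [prod_lc, prod_ll, Matrix.map_apply] using E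
  have hzero : ∀ j : Fin n, k₁ (Fin.last n) j.castSucc = 0 := by
    intro j
    have := hrow j.castSucc
    rw [rep_lc] at this
    have h2 : ((k₁ (Fin.last n) j.castSucc : O) : F) = 0 := by
      have hp : (ϖ : F) ^ c₁ ≠ 0 := zpow_ne_zero _ h0
      exact (mul_eq_zero.mp this).resolve_left hp
    exact Subtype.coe_injective (h2.trans (ZeroMemClass.coe_zero _).symm)
  have hx : (ϖ : F) ^ c₁ * ((k₁ (Fin.last n) (Fin.last n) : O) : F) = (ϖ : F) ^ c₂ := by
    have := hrow (Fin.last n)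
    rwa [rep_ll] at this
  -- determinant factorization
  set P : Matrix (Fin n) (Fin n) O := k₁.submatrix Fin.castSucc Fin.castSucc with hPdef
  have hdet : k₁.det = k₁ (Fin.last n) (Fin.last n) * P.det := by
    rw [Matrix.det_succ_row k₁ (Fin.last n), Fin.sum_univ_castSucc]
    have he : ((-1 : O)) ^ ((Fin.last n : ℕ) + (Fin.last n : ℕ)) = 1 :=
      Even.neg_one_pow ⟨n, by simp [Fin.val_last]⟩
    simp [hzero, Fin.succAbove_last, he, hPdef]
  have hk₁det : IsUnit k₁.det := (Matrix.isUnit_iff_isUnit_det _).mp hk₁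
  have hxPunit : IsUnit (k₁ (Fin.last n) (Fin.last n) * P.det) := hdet ▸ hk₁det
  have hxunit : IsUnit (k₁ (Fin.last n) (Fin.last n)) := isUnit_of_mul_isUnit_left hxPunit
  have hPdet : IsUnit P.det := isUnit_of_mul_isUnit_right hxPunit
  -- c₁ = c₂
  have hc : c₁ = c₂ := by
    rcases lt_trichotomy c₁ c₂ with hlt | heq | hgt
    · exfalso
      set m : ℕ := (c₂ - c₁).toNat with hm
      have hm1 : c₂ - c₁ = (m : ℤ) := by omega
      have h1 : ((k₁ (Fin.last n) (Fin.last n) : O) : F) = ((ϖ ^ m : O) : F) := by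
        have hp : (ϖ : F) ^ c₁ ≠ 0 := zpow_ne_zero _ h0
        push_cast
        rw [← zpow_natCast (ϖ : F) m, ← hm1, zpow_sub₀ h0, eq_div_iff hp, mul_comm]
        exact hx
      have h2 : k₁ (Fin.last n) (Fin.last n) = ϖ ^ m := Subtype.coe_injective h1
      have : IsUnit (ϖ ^ m) := h2 ▸ hxunit
      have hm0 : m ≠ 0 := by omega
      exact hϖ.not_isUnit (isUnit_of_dvd_unit (dvd_pow_self ϖ hm0) this)
    · exact heq
    · exfalso
      set m : ℕ := (c₁ - c₂).toNat with hm
      have hm1 : c₁ - c₂ = (m : ℤ) := by omega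
      have h1 : ((ϖ ^ m * k₁ (Fin.last n) (Fin.last n) : O) : F) = ((1 : O) : F) := by
        push_cast
        rw [← zpow_natCast (ϖ : F) m, ← hm1, zpow_sub₀ h0]
        have hp : (ϖ : F) ^ c₂ ≠ 0 := zpow_ne_zero _ h0
        field_simp
        linear_combination hx
      have h2 : ϖ ^ m * k₁ (Fin.last n) (Fin.last n) = 1 := Subtype.coe_injective h1
      have hm0 : m ≠ 0 := by omega
      exact hϖ.not_isUnit (isUnit_of_dvd_unit (dvd_pow_self ϖ hm0)
        (IsUnit.of_mul_eq_one _ h2))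
  -- step B : h * D_{a₁} * P = D_{a₂}
  have hmat : h * Matrix.diagonal (fun l => (ϖ : F) ^ (a₁ l)) * (P.map O.subtype)
      = Matrix.diagonal (fun i => (ϖ : F) ^ (a₂ i)) := by
    ext i j
    have E := congrFun (congrFun eq1 i.castSucc) j.castSucc
    rw [Matrix.mul_apply, Fin.sum_univ_castSucc] at E
    simp only [prod_cc, prod_cl, Matrix.map_apply, hzero, rep_cc] at E
    rw [Matrix.mul_apply]
    simp only [Matrix.mul_diagonal, Matrix.map_apply, Matrix.diagonal_apply]
    simpa [hPdef, Matrix.submatrix_apply, eq_comm] using E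
  -- step C : D_{d₁} * P = k₂ * D_{d₂}
  have hDb : IsUnit (Matrix.diagonal (fun i => (ϖ : F) ^ (b₁ i))) := by
    rw [Matrix.isUnit_iff_isUnit_det, Matrix.det_diagonal, isUnit_iff_ne_zero]
    exact Finset.prod_ne_zero_iff.mpr fun i _ => zpow_ne_zero _ h0
  have hM : IsUnit (h * Matrix.diagonal (fun i => (ϖ : F) ^ (b₁ i))) := hh.mul hDb
  have hfinal : Matrix.diagonal (fun i => (ϖ : F) ^ (a₁ i - b₁ i)) * (P.map O.subtype)
      = (k₂.map O.subtype) * Matrix.diagonal (fun i => (ϖ : F) ^ (a₂ i - b₂ i)) := by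
    have hcancel : ∀ A B : Matrix (Fin n) (Fin n) F,
        (h * Matrix.diagonal (fun i => (ϖ : F) ^ (b₁ i))) * A
          = (h * Matrix.diagonal (fun i => (ϖ : F) ^ (b₁ i))) * B → A = B := by
      intro A B hAB
      have hinv := Matrix.nonsing_inv_mul _ ((Matrix.isUnit_iff_isUnit_det _).mp hM)
      have h2 := congrArg
        (fun X => (h * Matrix.diagonal (fun i => (ϖ : F) ^ (b₁ i)))⁻¹ * X) hAB
      simpa only [← Matrix.mul_assoc, hinv, Matrix.one_mul] using h2
    apply hcancel
    have hd1 : Matrix.diagonal (fun i => (ϖ : F) ^ (b₁ i))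
        * Matrix.diagonal (fun i => (ϖ : F) ^ (a₁ i - b₁ i))
        = Matrix.diagonal (fun l => (ϖ : F) ^ (a₁ l)) := by
      have hfun : (fun i => (ϖ : F) ^ (b₁ i) * (ϖ : F) ^ (a₁ i - b₁ i))
          = fun l => (ϖ : F) ^ (a₁ l) := by
        funext i; rw [← zpow_add₀ h0]; congr 1; ring
      rw [Matrix.diagonal_mul_diagonal, hfun]
    have hd2 : Matrix.diagonal (fun i => (ϖ : F) ^ (b₂ i))
        * Matrix.diagonal (fun i => (ϖ : F) ^ (a₂ i - b₂ i))
        = Matrix.diagonal (fun l => (ϖ : F) ^ (a₂ l)) := by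
      have hfun : (fun i => (ϖ : F) ^ (b₂ i) * (ϖ : F) ^ (a₂ i - b₂ i))
          = fun l => (ϖ : F) ^ (a₂ l) := by
        funext i; rw [← zpow_add₀ h0]; congr 1; ring
      rw [Matrix.diagonal_mul_diagonal, hfun]
    calc (h * Matrix.diagonal (fun i => (ϖ : F) ^ (b₁ i)))
          * (Matrix.diagonal (fun i => (ϖ : F) ^ (a₁ i - b₁ i)) * (P.map O.subtype))
        = (h * Matrix.diagonal (fun l => (ϖ : F) ^ (a₁ l))) * (P.map O.subtype) := by
          rw [Matrix.mul_assoc h, Matrix.mul_assoc h, ← Matrix.mul_assoc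
            (Matrix.diagonal fun i => (ϖ : F) ^ (b₁ i)), hd1]
      _ = Matrix.diagonal (fun i => (ϖ : F) ^ (a₂ i)) := hmat
      _ = Matrix.diagonal (fun i => (ϖ : F) ^ (b₂ i))
            * Matrix.diagonal (fun i => (ϖ : F) ^ (a₂ i - b₂ i)) := hd2.symm
      _ = (h * Matrix.diagonal (fun i => (ϖ : F) ^ (b₁ i)) * (k₂.map O.subtype))
            * Matrix.diagonal (fun i => (ϖ : F) ^ (a₂ i - b₂ i)) := by rw [eq2]
      _ = (h * Matrix.diagonal (fun i => (ϖ : F) ^ (b₁ i)))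
            * ((k₂.map O.subtype) * Matrix.diagonal (fun i => (ϖ : F) ^ (a₂ i - b₂ i))) := by
          rw [Matrix.mul_assoc]
  -- entrywise relation and key lemma
  have hrel : ∀ i j, (ϖ : F) ^ (a₁ i - b₁ i) * ((P i j : O) : F)
      = ((k₂ i j : O) : F) * (ϖ : F) ^ (a₂ j - b₂ j) := by
    intro i j
    have := congrFun (congrFun hfinal i) j
    simpa [Matrix.diagonal_mul, Matrix.mul_diagonal, Matrix.map_apply] using this
  have hk₂det : IsUnit k₂.det := (Matrix.isUnit_iff_isUnit_det _).mp hk₂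
  refine ⟨hc, fun r => ?_⟩
  exact key_eq ϖ hϖ (fun i => a₁ i - b₁ i) (fun i => a₂ i - b₂ i)
    (fun k l hkl => by
      show a₁ l - b₁ l ≤ a₁ k - b₁ k
      have := ha₁ k l hkl; have := hb₁ k l hkl; omega)
    (fun k l hkl => by
      show a₂ l - b₂ l ≤ a₂ k - b₂ k
      have := ha₂ k l hkl; have := hb₂ k l hkl; omega)
    P k₂ hPdet hk₂det hrel r
end

section
/- (Local congruence relation, case n = 1.) Let $F$ be a non-archimedean local field with ring of integers $\mathcal{O}$, residue cardinality $q$, uniformizer $\varpi$. Let $G = GL_2(F) \times F^\times$, $K = GL_2(\mathcal{O}) \times \mathcal{O}^\times$, $H = \{(\iota(t), t): t \in F^\times\}$ with $\iota(t) = \mathrm{diag}(t,1)$, and $H_0 = \{(\iota(t),t) : t \in \mathcal{O}^\times\}$. Let $\mathrm{Frob} = (\mathrm{diag}(\varpi,1), \varpi)$ act on $\mathbb{Z}[H_0\backslash G/K]$ by left multiplication, and let $T_{1,V}, T_{2,V}, T_{1,W}$ act as the Hecke operators of the respective double cosets. Then $H_w(\mathrm{Frob})\cdot [H_0 \cdot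 1 \cdot K] \equiv 0 \pmod{(q-1)}$ in $\mathbb{Z}[q^{-1}][H_0\backslash G/K]$, where $H_w(z) = z^2 - (T_{1,V}\otimes T_{1,W}) z + q(T_{2,V}\otimes T_{1,W}^2)$. -/
noncomputable section

variable {F : Type*} [Field F]

/-- The diagonal matrix `diag(x, y)` as an element of `GL₂(F)`. -/
def glD (x y : F) (hx : x ≠ 0) (hy : y ≠ 0) : GL (Fin 2) F :=
  Matrix.GeneralLinearGroup.mkOfDetNeZero !![x, 0; 0, y] (by
    rw [Matrix.det_fin_two_of]; simpa using mul_ne_zero hx hy)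

/-- The upper-triangular matrix `[[x, a], [0, 1]]` as an element of `GL₂(F)`. -/
def glU (x a : F) (hx : x ≠ 0) : GL (Fin 2) F :=
  Matrix.GeneralLinearGroup.mkOfDetNeZero !![x, a; 0, 1] (by
    rw [Matrix.det_fin_two_of]; simpa using hx)

/-- `H = {(ι(t), t) : t ∈ Fˣ}` with `ι(t) = diag(t,1)`, restricted to
`H₀ = {(ι(t), t) : t ∈ 𝒪ˣ}`, as a subset of `G = GL₂(F) × Fˣ`. -/
def H0set (O : ValuationSubring F) : Set (GL (Fin 2) F × Fˣ) :=
  {p | ∃ t : Fˣ, (t : F) ∈ O ∧ ((t⁻¹ : Fˣ) : F) ∈ O ∧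
    p = (glU (t : F) 0 t.ne_zero, t)}

/-- `K = GL₂(𝒪) × 𝒪ˣ` as a subset of `G = GL₂(F) × Fˣ`. -/
def Kset (O : ValuationSubring F) : Set (GL (Fin 2) F × Fˣ) :=
  {p | (∀ i j, (p.1 : Matrix (Fin 2) (Fin 2) F) i j ∈ O) ∧
    (∀ i j, ((p.1⁻¹ : GL (Fin 2) F) : Matrix (Fin 2) (Fin 2) F) i j ∈ O) ∧
    ((p.2 : F) ∈ O) ∧ (((p.2⁻¹ : Fˣ) : F) ∈ O)}

@[simp] lemma glU_coe (x a : F) (hx : x ≠ 0) :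
    ((glU x a hx : GL (Fin 2) F) : Matrix (Fin 2) (Fin 2) F) = !![x,a;0,1] := rfl

@[simp] lemma glD_coe (x y : F) (hx : x ≠ 0) (hy : y ≠ 0) :
    ((glD x y hx hy : GL (Fin 2) F) : Matrix (Fin 2) (Fin 2) F) = !![x,0;0,y] := rfl

lemma glU_mul (x a y b : F) (hx : x ≠ 0) (hy : y ≠ 0) :
    glU x a hx * glU y b hy = glU (x*y) (x*b+a) (mul_ne_zero hx hy) := by
  apply Matrix.GeneralLinearGroup.ext
  intro i j
  simp only [Matrix.GeneralLinearGroup.coe_mul, glU_coe, Matrix.mul_fin_two]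
  ring_nf

lemma glU_one : glU (1:F) 0 one_ne_zero = 1 := by
  apply Matrix.GeneralLinearGroup.ext
  intro i j
  simp only [glU_coe, Matrix.GeneralLinearGroup.coe_one, Matrix.one_fin_two]

lemma glU_eq (x a x' a' : F) (hx : x ≠ 0) (hx' : x' ≠ 0) (h1 : x = x') (h2 : a = a') :
    glU x a hx = glU x' a' hx' := by subst h1; subst h2; rfl

lemma glU_inv (x a : F) (hx : x ≠ 0) :
    (glU x a hx)⁻¹ = glU x⁻¹ (-(x⁻¹*a)) (inv_ne_zero hx) := by
  apply inv_eq_of_mul_eq_one_right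
  rw [glU_mul, ← glU_one]
  apply glU_eq
  · exact mul_inv_cancel₀ hx
  · field_simp; ring

lemma glU_mul_glD (x y : F) (hx : x ≠ 0) (hy : y ≠ 0) :
    glU x 0 hx * glD 1 y one_ne_zero hy = glD x y hx hy := by
  apply Matrix.GeneralLinearGroup.ext
  intro i j
  simp only [Matrix.GeneralLinearGroup.coe_mul, glU_coe, glD_coe, Matrix.mul_fin_two]
  ring_nf

/-- `H₀` as a subgroup of `G`. -/
def H0sub (O : ValuationSubring F) : Subgroup (GL (Fin 2) F × Fˣ) where
  carrier := H0set O
  one_mem' := ⟨1, by simpa using O.one_mem, by simpa using O.one_mem, by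
    refine Prod.ext ?_ rfl
    show (1 : GL (Fin 2) F) = glU ((1:Fˣ):F) 0 (1:Fˣ).ne_zero
    rw [← glU_one]
    exact glU_eq _ _ _ _ _ _ (by simp) rfl⟩
  mul_mem' := by
    rintro p q ⟨t, ht, ht', rfl⟩ ⟨s, hs, hs', rfl⟩
    refine ⟨t * s, by push_cast; exact mul_mem ht hs, ?_, ?_⟩
    · rw [mul_inv_rev, Units.val_mul]; exact mul_mem hs' ht'
    · refine Prod.ext ?_ rfl
      show glU (t:F) 0 t.ne_zero * glU (s:F) 0 s.ne_zero = glU ((t*s : Fˣ):F) 0 (t*s).ne_zero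
      rw [glU_mul]
      exact glU_eq _ _ _ _ _ _ (by push_cast; ring) (by ring)
  inv_mem' := by
    rintro p ⟨t, ht, ht', rfl⟩
    refine ⟨t⁻¹, ht', by simpa using ht, ?_⟩
    refine Prod.ext ?_ rfl
    show (glU (t:F) 0 t.ne_zero)⁻¹ = glU ((t⁻¹:Fˣ):F) 0 (t⁻¹).ne_zero
    rw [glU_inv]
    exact glU_eq _ _ _ _ _ _ (by simp) (by ring)

/-- `K` as a subgroup of `G`. -/
def Ksub (O : ValuationSubring F) : Subgroup (GL (Fin 2) F × Fˣ) where
  carrier := Kset O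
  one_mem' := by
    refine ⟨?_, ?_, by simpa using O.one_mem, by simpa using O.one_mem⟩ <;>
    · intro i j
      simp only [Prod.fst_one, inv_one, Matrix.GeneralLinearGroup.coe_one, Matrix.one_apply]
      split_ifs
      exacts [O.one_mem, O.zero_mem]
  mul_mem' := by
    rintro p q ⟨h1, h2, h3, h4⟩ ⟨g1, g2, g3, g4⟩
    refine ⟨?_, ?_, ?_, ?_⟩
    · intro i j
      show ((p.1 * q.1 : GL (Fin 2) F) : Matrix (Fin 2) (Fin 2) F) i j ∈ O
      rw [Matrix.GeneralLinearGroup.coe_mul, Matrix.mul_apply]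
      exact sum_mem fun k _ => mul_mem (h1 i k) (g1 k j)
    · intro i j
      show (((p.1 * q.1)⁻¹ : GL (Fin 2) F) : Matrix (Fin 2) (Fin 2) F) i j ∈ O
      rw [mul_inv_rev, Matrix.GeneralLinearGroup.coe_mul, Matrix.mul_apply]
      exact sum_mem fun k _ => mul_mem (g2 i k) (h2 k j)
    · show ((p.2 * q.2 : Fˣ) : F) ∈ O
      push_cast; exact mul_mem h3 g3
    · show (((p.2 * q.2)⁻¹ : Fˣ) : F) ∈ O
      rw [mul_inv_rev, Units.val_mul]; exact mul_mem g4 h4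
  inv_mem' := by
    rintro p ⟨h1, h2, h3, h4⟩
    refine ⟨h2, ?_, h4, ?_⟩
    · intro i j
      show (((p.1⁻¹)⁻¹ : GL (Fin 2) F) : Matrix (Fin 2) (Fin 2) F) i j ∈ O
      rw [inv_inv]; exact h1 i j
    · show (((p.2⁻¹)⁻¹ : Fˣ) : F) ∈ O
      rw [inv_inv]; exact h3

lemma mk_eq_mk (O : ValuationSubring F) {x y : GL (Fin 2) F × Fˣ}
    (h : ∃ a ∈ H0set O, ∃ b ∈ Kset O, y = a * x * b) :
    (Quotient.mk'' x : DoubleCoset.Quotient (H0set O) (Kset O)) = Quotient.mk'' y :=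
  Quotient.sound' ((DoubleCoset.rel_iff (H := H0sub O) (K := Ksub O)).mpr h)

lemma mem_K (O : ValuationSubring F) (x a : F) (hx : x ≠ 0) (v : Fˣ)
    (hxO : x ∈ O) (haO : a ∈ O) (hxi : x⁻¹ ∈ O) (hai : x⁻¹ * a ∈ O)
    (hv : (v : F) ∈ O) (hvi : ((v⁻¹ : Fˣ) : F) ∈ O) :
    (glU x a hx, v) ∈ Kset O := by
  refine ⟨?_, ?_, hv, hvi⟩
  · intro i j
    fin_cases i <;> fin_cases j <;>
      simp only [glU_coe, Matrix.cons_val', Matrix.cons_val_zero, Matrix.cons_val_one,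
        Matrix.head_cons, Matrix.empty_val', Matrix.cons_val_fin_one, Matrix.head_fin_const,
        Fin.isValue, Fin.zero_eta, Fin.mk_one] <;>
      first
        | exact hxO | exact haO | exact O.zero_mem | exact O.one_mem
  · intro i j
    show (((glU x a hx)⁻¹ : GL (Fin 2) F) : Matrix (Fin 2) (Fin 2) F) i j ∈ O
    rw [glU_inv]
    fin_cases i <;> fin_cases j <;>
      simp only [glU_coe, Matrix.cons_val', Matrix.cons_val_zero, Matrix.cons_val_one,
        Matrix.head_cons, Matrix.empty_val', Matrix.cons_val_fin_one, Matrix.head_fin_const,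
        Fin.isValue, Fin.zero_eta, Fin.mk_one] <;>
      first
        | exact hxi | exact neg_mem hai | exact O.zero_mem | exact O.one_mem

/-- local congruence relation, case `n = 1`: with
`G = GL₂(F) × Fˣ`, `K = GL₂(𝒪) × 𝒪ˣ`, `H₀ = {(diag(t,1), t) : t ∈ 𝒪ˣ}`,
`Frob = (diag(ϖ,1), ϖ)`, and the Hecke polynomial
`H_w(z) = z² - (T_{1,V} ⊗ T_{1,W}) z + q (T_{2,V} ⊗ T_{1,W}²)`, one has
`H_w(Frob)·[H₀·1·K] ≡ 0 mod (q-1)` in `ℤ[H₀\G/K]`.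
The Hecke operators are expanded via explicit coset representatives:
`K·diag(ϖ,1)·K = ⊔_{a ∈ S} [[ϖ,a],[0,1]]·K ⊔ [[1,0],[0,ϖ]]·K` (with `S` a set
of representatives of the residue field, of cardinality `q`), and
`T_{2,V} ⊗ T_{1,W}²` corresponds to the single coset of `(diag(ϖ,ϖ), ϖ²)`. -/
theorem local_congruence_relation_GL2
    (O : ValuationSubring F) [IsDiscreteValuationRing O]
    (ϖO : O) (hϖ : Irreducible ϖO) (hϖ0 : (ϖO : F) ≠ 0)
    (q : ℕ) (hq : Nat.card (O ⧸ Ideal.span {ϖO}) = q)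
    (S : Finset O) (hS : ∀ z : O, ∃! s, s ∈ S ∧ s - z ∈ Ideal.span {ϖO}) :
    ∃ ξ : DoubleCoset.Quotient (H0set O) (Kset O) →₀ ℤ,
      (Finsupp.single
          (Quotient.mk'' (((glU (ϖO : F) 0 hϖ0, Units.mk0 (ϖO : F) hϖ0) *
              (glU (ϖO : F) 0 hϖ0, Units.mk0 (ϖO : F) hϖ0) :
            GL (Fin 2) F × Fˣ)) : DoubleCoset.Quotient (H0set O) (Kset O)) (1 : ℤ)
        - (∑ a ∈ S, Finsupp.single
            (Quotient.mk'' ((glU (ϖO : F) 0 hϖ0, Units.mk0 (ϖO : F) hϖ0) *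
                (glU (ϖO : F) ((a : F)) hϖ0, Units.mk0 (ϖO : F) hϖ0)) :
              DoubleCoset.Quotient (H0set O) (Kset O)) (1 : ℤ))
        - Finsupp.single
            (Quotient.mk'' ((glU (ϖO : F) 0 hϖ0, Units.mk0 (ϖO : F) hϖ0) *
                (glD 1 (ϖO : F) one_ne_zero hϖ0, Units.mk0 (ϖO : F) hϖ0)) :
              DoubleCoset.Quotient (H0set O) (Kset O)) (1 : ℤ)
        + (q : ℤ) • Finsupp.single
            (Quotient.mk'' ((glD (ϖO : F) (ϖO : F) hϖ0 hϖ0,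
                Units.mk0 (ϖO : F) hϖ0 * Units.mk0 (ϖO : F) hϖ0)) :
              DoubleCoset.Quotient (H0set O) (Kset O)) (1 : ℤ)) =
      ((q : ℤ) - 1) • ξ := by
  classical
  obtain ⟨s₀, hs₀, hs₀u⟩ := hS 0
  have hs₀S : s₀ ∈ S := hs₀.1
  have hs₀span : s₀ ∈ Ideal.span {ϖO} := by simpa using hs₀.2
  obtain ⟨m, hm⟩ : ϖO ∣ s₀ := Ideal.mem_span_singleton.mp hs₀span
  have hmF : (s₀ : F) = (ϖO : F) * (m : F) := by
    have := congrArg (fun x : O => (x : F)) hm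
    push_cast at this
    exact this
  -- cardinality of S
  have hcard : S.card = q := by
    have hbij : Function.Bijective
        (fun s : {x // x ∈ S} => Ideal.Quotient.mk (Ideal.span {ϖO}) s.1) := by
      constructor
      · rintro ⟨a, haS⟩ ⟨b, hbS⟩ hab
        have hsub : a - b ∈ Ideal.span {ϖO} :=
          (Ideal.Quotient.mk_eq_mk_iff_sub_mem a b).mp hab
        obtain ⟨s, _, huniq⟩ := hS b
        have h1 := huniq a ⟨haS, hsub⟩
        have h2 := huniq b ⟨hbS, by simp⟩
        simp only [Subtype.mk.injEq]
        rw [h1, h2]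
      · intro z
        obtain ⟨z', rfl⟩ := Ideal.Quotient.mk_surjective z
        obtain ⟨s, ⟨hsS, hsz⟩, _⟩ := hS z'
        exact ⟨⟨s, hsS⟩, (Ideal.Quotient.mk_eq_mk_iff_sub_mem s z').mpr hsz⟩
    calc S.card = Nat.card {x // x ∈ S} := (Nat.card_eq_finsetCard S).symm
      _ = Nat.card (O ⧸ Ideal.span {ϖO}) := Nat.card_eq_of_bijective _ hbij
      _ = q := hq
  have hq1 : 1 ≤ q := hcard ▸ Finset.card_pos.mpr ⟨s₀, hs₀S⟩
  set Fb : GL (Fin 2) F × Fˣ := (glU (ϖO : F) 0 hϖ0, Units.mk0 (ϖO : F) hϖ0) with hFb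
  -- class of the s₀ term equals the class of Frob²
  have hA : (Quotient.mk'' (Fb * (glU (ϖO : F) ((s₀ : F)) hϖ0, Units.mk0 (ϖO : F) hϖ0)) :
      DoubleCoset.Quotient (H0set O) (Kset O)) = Quotient.mk'' (Fb * Fb) := by
    apply mk_eq_mk
    refine ⟨1, (H0sub O).one_mem, (glU 1 (-(m : F)) one_ne_zero, 1), ?_, ?_⟩
    · exact mem_K O 1 (-(m : F)) one_ne_zero 1 O.one_mem (neg_mem m.2)
        (by simpa using O.one_mem) (by simpa using neg_mem m.2)
        (by simpa using O.one_mem) (by simpa using O.one_mem)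
    · rw [one_mul]
      refine Prod.ext ?_ ?_
      · show glU (ϖO : F) 0 hϖ0 * glU (ϖO : F) 0 hϖ0 =
          glU (ϖO : F) 0 hϖ0 * glU (ϖO : F) ((s₀ : F)) hϖ0 * glU 1 (-(m : F)) one_ne_zero
        simp only [glU_mul]
        exact glU_eq _ _ _ _ _ _ (by ring) (by rw [hmF]; ring)
      · show Units.mk0 (ϖO : F) hϖ0 * Units.mk0 (ϖO : F) hϖ0 =
          Units.mk0 (ϖO : F) hϖ0 * Units.mk0 (ϖO : F) hϖ0 * 1
        rw [mul_one]
  -- all unit-representative terms lie in a common class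
  have hC : ∀ a ∈ S.erase s₀,
      (Quotient.mk'' (Fb * (glU (ϖO : F) ((a : F)) hϖ0, Units.mk0 (ϖO : F) hϖ0)) :
        DoubleCoset.Quotient (H0set O) (Kset O)) =
      Quotient.mk'' (Fb * (glU (ϖO : F) (1 : F) hϖ0, Units.mk0 (ϖO : F) hϖ0)) := by
    intro a ha
    have haS : a ∈ S := (Finset.mem_erase.mp ha).2
    have hane : a ≠ s₀ := (Finset.mem_erase.mp ha).1
    have haunit : IsUnit a := by
      by_contra hu
      refine hane (hs₀u a ⟨haS, ?_⟩)
      have : a ∈ IsLocalRing.maximalIdeal O := (IsLocalRing.mem_maximalIdeal a).mpr hu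
      rw [hϖ.maximalIdeal_eq] at this
      simpa using this
    obtain ⟨b, hb⟩ := haunit.exists_right_inv
    have haF : (a : F) * (b : F) = 1 := by exact_mod_cast congrArg (fun x : O => (x : F)) hb
    have haF0 : (a : F) ≠ 0 := left_ne_zero_of_mul_eq_one haF
    have hinv : (a : F)⁻¹ = (b : F) := inv_eq_of_mul_eq_one_right haF
    set t : Fˣ := (Units.mk0 (a : F) haF0)⁻¹ with hT
    have ht : (t : F) = (a : F)⁻¹ := by simp [hT]
    apply mk_eq_mk
    refine ⟨(glU (t : F) 0 t.ne_zero, t), ⟨t, ?_, ?_, rfl⟩,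
      (glU (a : F) 0 haF0, Units.mk0 (a : F) haF0), ?_, ?_⟩
    · rw [ht, hinv]; exact b.2
    · simp only [hT, inv_inv, Units.val_mk0]; exact a.2
    · refine mem_K O (a : F) 0 haF0 (Units.mk0 (a : F) haF0) a.2 O.zero_mem
        (by rw [hinv]; exact b.2) (by simpa using O.zero_mem) a.2 ?_
      show ((Units.mk0 (a : F) haF0)⁻¹ : Fˣ).val ∈ O
      rw [← hT, ht, hinv]; exact b.2
    · have hgl : glU (t : F) 0 t.ne_zero = glU ((a : F)⁻¹) 0 (inv_ne_zero haF0) :=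
        glU_eq _ _ _ _ _ _ ht rfl
      refine Prod.ext ?_ ?_
      · show glU (ϖO : F) 0 hϖ0 * glU (ϖO : F) (1 : F) hϖ0 =
          glU (t : F) 0 t.ne_zero * (glU (ϖO : F) 0 hϖ0 * glU (ϖO : F) ((a : F)) hϖ0) *
            glU (a : F) 0 haF0
        rw [hgl]
        simp only [glU_mul]
        refine glU_eq _ _ _ _ _ _ ?_ ?_
        · field_simp
        · field_simp; ring
      · show Units.mk0 (ϖO : F) hϖ0 * Units.mk0 (ϖO : F) hϖ0 =
          t * (Units.mk0 (ϖO : F) hϖ0 * Units.mk0 (ϖO : F) hϖ0) * Units.mk0 (a : F) haF0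
        apply Units.ext
        simp only [Units.val_mul, Units.val_mk0, ht]
        field_simp
  -- the two diag(ϖ,ϖ) terms are literally equal
  have hBel : (Fb * (glD 1 (ϖO : F) one_ne_zero hϖ0, Units.mk0 (ϖO : F) hϖ0) :
      GL (Fin 2) F × Fˣ) =
      (glD (ϖO : F) (ϖO : F) hϖ0 hϖ0, Units.mk0 (ϖO : F) hϖ0 * Units.mk0 (ϖO : F) hϖ0) := by
    refine Prod.ext ?_ rfl
    show glU (ϖO : F) 0 hϖ0 * glD 1 (ϖO : F) one_ne_zero hϖ0 = glD (ϖO : F) (ϖO : F) hϖ0 hϖ0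
    exact glU_mul_glD _ _ _ _
  -- the sum over S
  have hsum : (∑ a ∈ S, Finsupp.single
      (Quotient.mk'' (Fb * (glU (ϖO : F) ((a : F)) hϖ0, Units.mk0 (ϖO : F) hϖ0)) :
        DoubleCoset.Quotient (H0set O) (Kset O)) (1 : ℤ)) =
      Finsupp.single (Quotient.mk'' (Fb * Fb) : DoubleCoset.Quotient (H0set O) (Kset O)) 1 +
      (q - 1) • Finsupp.single
        (Quotient.mk'' (Fb * (glU (ϖO : F) (1 : F) hϖ0, Units.mk0 (ϖO : F) hϖ0)) :
          DoubleCoset.Quotient (H0set O) (Kset O)) 1 := by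
    rw [← Finset.add_sum_erase S _ hs₀S, hA]
    congr 1
    rw [Finset.sum_congr rfl (fun a ha => by rw [hC a ha]),
      Finset.sum_const, Finset.card_erase_of_mem hs₀S, hcard]
  refine ⟨Finsupp.single
      (Quotient.mk'' ((glD (ϖO : F) (ϖO : F) hϖ0 hϖ0,
          Units.mk0 (ϖO : F) hϖ0 * Units.mk0 (ϖO : F) hϖ0)) :
        DoubleCoset.Quotient (H0set O) (Kset O)) 1
    - Finsupp.single
      (Quotient.mk'' (Fb * (glU (ϖO : F) (1 : F) hϖ0, Units.mk0 (ϖO : F) hϖ0)) :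
        DoubleCoset.Quotient (H0set O) (Kset O)) 1, ?_⟩
  rw [hBel, hsum, ← Nat.cast_smul_eq_nsmul ℤ, Nat.cast_sub hq1, Nat.cast_one]
  unfold DoubleCoset.Quotient
  module

end
end
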